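/- arXiv:1608.05608 — 5 statements merged into one kernel-verified Lean document; each statement's English description precedes it below -/
import Mathlib

section
/- Let g, h be measure-preserving Borel partial isomorphisms of a standard probability space (X,μ). Then d_μ(g, h⁻¹) ≤ d_μ(g, g∘h∘g) + d_μ(h, h∘g∘h), where h⁻¹ : ran h → dom h is the set-theoretic inverse of h and ∘ denotes composition of partial maps. -/
open MeasureTheory Set

/-- A Borel partial isomorphism of a measurable space `X`: a Borel bijection
`toFun : dom → ran` between Borel subsets of `X` (presented via globally
measurable maps `toFun`, `invFun` that are mutually inverse between `dom` and `ran`). -/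
structure PartialIso (X : Type*) [MeasurableSpace X] where
  dom : Set X
  ran : Set X
  toFun : X → X
  invFun : X → X
  measurableSet_dom : MeasurableSet dom
  measurableSet_ran : MeasurableSet ran
  measurable_toFun : Measurable toFun
  measurable_invFun : Measurable invFun
  mapsTo : Set.MapsTo toFun dom ran
  mapsTo_inv : Set.MapsTo invFun ran dom
  left_inv : ∀ x ∈ dom, invFun (toFun x) = x
  right_inv : ∀ y ∈ ran, toFun (invFun y) = y

namespace PartialIso

variable {X : Type*} [MeasurableSpace X]

/-- The pseudometric `d_μ(g,h) = μ(dom g △ dom h) + μ{x ∈ dom g ∩ dom h : g x ≠ h x}`. -/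
noncomputable def dMu (μ : Measure X) (g h : PartialIso X) : ℝ :=
  (μ (symmDiff g.dom h.dom)).toReal +
    (μ {x | x ∈ g.dom ∩ h.dom ∧ g.toFun x ≠ h.toFun x}).toReal

/-- The trace `tr(g) = μ{x ∈ dom g : g x = x}`. -/
noncomputable def tr (μ : Measure X) (g : PartialIso X) : ℝ :=
  (μ {x | x ∈ g.dom ∧ g.toFun x = x}).toReal

/-- `g` is measure-preserving: `μ(g(A)) = μ(A)` for every Borel `A ⊆ dom g`. -/
def MeasurePreservingOn (μ : Measure X) (g : PartialIso X) : Prop :=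
  ∀ A : Set X, A ⊆ g.dom → MeasurableSet A → μ (g.toFun '' A) = μ A

/-- Composition of partial maps: `dom (h ∘ g) = g⁻¹(ran g ∩ dom h)`, `(h ∘ g) x = h (g x)`. -/
def comp (h g : PartialIso X) : PartialIso X where
  dom := g.dom ∩ g.toFun ⁻¹' h.dom
  ran := h.ran ∩ h.invFun ⁻¹' g.ran
  toFun := h.toFun ∘ g.toFun
  invFun := g.invFun ∘ h.invFun
  measurableSet_dom := g.measurableSet_dom.inter (g.measurable_toFun h.measurableSet_dom)
  measurableSet_ran := h.measurableSet_ran.inter (h.measurable_invFun g.measurableSet_ran)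
  measurable_toFun := h.measurable_toFun.comp g.measurable_toFun
  measurable_invFun := g.measurable_invFun.comp h.measurable_invFun
  mapsTo := by
    rintro x ⟨hx1, hx2⟩
    refine ⟨h.mapsTo hx2, ?_⟩
    simp only [Set.mem_preimage, Function.comp_apply]
    rw [h.left_inv _ hx2]
    exact g.mapsTo hx1
  mapsTo_inv := by
    rintro y ⟨hy1, hy2⟩
    refine ⟨g.mapsTo_inv hy2, ?_⟩
    simp only [Set.mem_preimage, Function.comp_apply]
    rw [g.right_inv _ hy2]
    exact h.mapsTo_inv hy1
  left_inv := by
    rintro x ⟨hx1, hx2⟩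
    simp only [Function.comp_apply]
    rw [h.left_inv _ hx2, g.left_inv _ hx1]
  right_inv := by
    rintro y ⟨hy1, hy2⟩
    simp only [Function.comp_apply]
    rw [g.right_inv _ hy2, h.right_inv _ hy1]

/-- The set-theoretic inverse `g⁻¹ : ran g → dom g`. -/
def inv (g : PartialIso X) : PartialIso X where
  dom := g.ran
  ran := g.dom
  toFun := g.invFun
  invFun := g.toFun
  measurableSet_dom := g.measurableSet_ran
  measurableSet_ran := g.measurableSet_dom
  measurable_toFun := g.measurable_invFun
  measurable_invFun := g.measurable_toFun
  mapsTo := g.mapsTo_inv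
  mapsTo_inv := g.mapsTo
  left_inv := g.right_inv
  right_inv := g.left_inv

/-- The identity `1_A` of a Borel set `A`. -/
def idOn (A : Set X) (hA : MeasurableSet A) : PartialIso X where
  dom := A
  ran := A
  toFun := id
  invFun := id
  measurableSet_dom := hA
  measurableSet_ran := hA
  measurable_toFun := measurable_id
  measurable_invFun := measurable_id
  mapsTo := Set.mapsTo_id A
  mapsTo_inv := Set.mapsTo_id A
  left_inv := fun _ _ => rfl
  right_inv := fun _ _ => rfl

end PartialIso

/-- `d_μ(g, h⁻¹) ≤ d_μ(g, g∘h∘g) + d_μ(h, h∘g∘h)` for measure-preserving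
Borel partial isomorphisms. -/
theorem dMu_inv_le {X : Type*} [MeasurableSpace X] [StandardBorelSpace X]
    (μ : Measure X) [IsProbabilityMeasure μ] (g h : PartialIso X)
    (hg : PartialIso.MeasurePreservingOn μ g) (hh : PartialIso.MeasurePreservingOn μ h) :
    PartialIso.dMu μ g h.inv ≤
      PartialIso.dMu μ g (g.comp (h.comp g)) + PartialIso.dMu μ h (h.comp (g.comp h)) := by
  classical
  letI := upgradeStandardBorel X
  have hEq : ∀ {f k : X → X}, Measurable f → Measurable k → MeasurableSet {x | f x = k x} :=
    fun hf hk => hf.stronglyMeasurable.measurableSet_eq_fun hk.stronglyMeasurable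
  set K1 := g.comp (h.comp g) with hK1
  set K2 := h.comp (g.comp h) with hK2
  -- basic sets
  set G : Set X := {x | x ∈ g.dom ∧ g.toFun x ∈ h.dom ∧ h.toFun (g.toFun x) = x} with hG
  set S : Set X := h.dom \ h.toFun ⁻¹' g.dom with hS
  -- the six measure quantities
  set L1 := μ (symmDiff g.dom h.inv.dom) with hL1def
  set L2 := μ {x | x ∈ g.dom ∩ h.inv.dom ∧ g.toFun x ≠ h.inv.toFun x} with hL2def
  set R1 := μ (symmDiff g.dom K1.dom) with hR1def
  set R2 := μ {x | x ∈ g.dom ∩ K1.dom ∧ g.toFun x ≠ K1.toFun x} with hR2def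
  set R3 := μ (symmDiff h.dom K2.dom) with hR3def
  set R4 := μ {x | x ∈ h.dom ∩ K2.dom ∧ h.toFun x ≠ K2.toFun x} with hR4def
  have hinvdom : h.inv.dom = h.ran := rfl
  have hinvfun : h.inv.toFun = h.invFun := rfl
  have hK1dom : K1.dom = (g.dom ∩ g.toFun ⁻¹' h.dom) ∩ (h.toFun ∘ g.toFun) ⁻¹' g.dom := rfl
  have hK2dom : K2.dom = (h.dom ∩ h.toFun ⁻¹' g.dom) ∩ (g.toFun ∘ h.toFun) ⁻¹' h.dom := rfl
  have hK1fun : K1.toFun = g.toFun ∘ (h.toFun ∘ g.toFun) := rfl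
  -- measurability facts
  have mDiffL : MeasurableSet {x | x ∈ g.dom ∩ h.inv.dom ∧ g.toFun x ≠ h.inv.toFun x} := by
    have : {x | x ∈ g.dom ∩ h.inv.dom ∧ g.toFun x ≠ h.inv.toFun x}
        = (g.dom ∩ h.ran) ∩ {x | g.toFun x = h.invFun x}ᶜ := by
      ext x
      simp only [hinvdom, hinvfun, Set.mem_setOf_eq, Set.mem_inter_iff, Set.mem_compl_iff]
    rw [this]
    exact (g.measurableSet_dom.inter h.measurableSet_ran).inter
      (hEq g.measurable_toFun h.measurable_invFun).compl
  -- key inequality in ℝ≥0∞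
  have key : L1 + L2 ≤ (R1 + R2) + (R3 + R4) := by
    -- Step A : split the symmetric difference
    have hA : L1 = μ (g.dom \ h.ran) + μ (h.ran \ g.dom) := by
      rw [hL1def, hinvdom, Set.symmDiff_def]
      exact measure_union disjoint_sdiff_sdiff (h.measurableSet_ran.diff g.measurableSet_dom)
    -- Step B : μ(dg\rh) + L2 ≤ μ(dg \ G)
    have hB : μ (g.dom \ h.ran) + L2 ≤ μ (g.dom \ G) := by
      rw [hL2def, ← measure_union ?disj mDiffL]
      case disj =>
        rw [Set.disjoint_left]
        rintro x ⟨-, hxr⟩ ⟨⟨-, hxr'⟩, -⟩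
        exact hxr hxr'
      apply measure_mono
      rintro x (⟨hxd, hxr⟩ | ⟨⟨hxd, hxr⟩, hne⟩)
      · refine ⟨hxd, fun hxG => hxr ?_⟩
        rcases hxG with ⟨-, hgd, hge⟩
        exact hge ▸ h.mapsTo hgd
      · refine ⟨hxd, fun hxG => hne ?_⟩
        rcases hxG with ⟨-, hgd, hge⟩
        rw [hinvfun]
        conv_rhs => rw [← hge]
        rw [h.left_inv _ hgd]
    -- Step C : μ(dg \ G) ≤ R1 + R2
    have hC : μ (g.dom \ G) ≤ R1 + R2 := by
      have hsub : g.dom \ G ⊆ (symmDiff g.dom K1.dom) ∪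
          {x | x ∈ g.dom ∩ K1.dom ∧ g.toFun x ≠ K1.toFun x} := by
        rintro x ⟨hxd, hxG⟩
        by_cases hxK : x ∈ K1.dom
        · right
          rcases hxK with ⟨⟨-, hgd⟩, hhg⟩
          refine ⟨⟨hxd, ⟨⟨hxd, hgd⟩, hhg⟩⟩, fun heq => hxG ⟨hxd, hgd, ?_⟩⟩
          have hhg' : h.toFun (g.toFun x) ∈ g.dom := hhg
          have heq' : g.toFun x = g.toFun (h.toFun (g.toFun x)) := heq
          have := congrArg g.invFun heq'
          rw [g.left_inv _ hxd, g.left_inv _ hhg'] at this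
          exact this.symm
        · left
          rw [Set.symmDiff_def]
          exact Or.inl ⟨hxd, hxK⟩
      calc μ (g.dom \ G) ≤ μ ((symmDiff g.dom K1.dom) ∪
          {x | x ∈ g.dom ∩ K1.dom ∧ g.toFun x ≠ K1.toFun x}) := measure_mono hsub
        _ ≤ R1 + R2 := measure_union_le _ _
    -- Step D : μ(rh \ dg) ≤ R3
    have hD : μ (h.ran \ g.dom) ≤ R3 := by
      have himg : h.toFun '' S = h.ran \ g.dom := by
        ext y
        constructor
        · rintro ⟨x, ⟨hxd, hxp⟩, rfl⟩
          exact ⟨h.mapsTo hxd, hxp⟩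
        · rintro ⟨hyr, hyd⟩
          refine ⟨h.invFun y, ⟨h.mapsTo_inv hyr, ?_⟩, h.right_inv _ hyr⟩
          simp only [Set.mem_preimage, h.right_inv _ hyr]
          exact hyd
      have hmeas : μ (h.ran \ g.dom) = μ S := by
        rw [← himg]
        exact hh S (fun x hx => hx.1)
          (h.measurableSet_dom.diff (h.measurable_toFun g.measurableSet_dom))
      rw [hmeas, hR3def]
      apply measure_mono
      rintro y ⟨hyd, hyp⟩
      rw [Set.symmDiff_def]
      refine Or.inl ⟨hyd, fun hyK => hyp ?_⟩
      rcases hyK with ⟨⟨-, hyg⟩, -⟩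
      exact hyg
    calc L1 + L2 = (μ (g.dom \ h.ran) + L2) + μ (h.ran \ g.dom) := by rw [hA]; ring
      _ ≤ μ (g.dom \ G) + μ (h.ran \ g.dom) := add_le_add_left hB _
      _ ≤ (R1 + R2) + R3 := add_le_add hC hD
      _ ≤ (R1 + R2) + (R3 + R4) := by
          exact add_le_add_right (le_add_right le_rfl) _
  -- convert to reals
  have fin : ∀ s : Set X, μ s ≠ ⊤ := fun s => measure_ne_top μ s
  unfold PartialIso.dMu
  rw [← ENNReal.toReal_add (fin _) (fin _), ← ENNReal.toReal_add (fin _) (fin _),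
    ← ENNReal.toReal_add (fin _) (fin _),
    ← ENNReal.toReal_add (ENNReal.add_ne_top.2 ⟨fin _, fin _⟩) (ENNReal.add_ne_top.2 ⟨fin _, fin _⟩)]
  exact ENNReal.toReal_mono
    (ENNReal.add_ne_top.2 ⟨ENNReal.add_ne_top.2 ⟨fin _, fin _⟩,
      ENNReal.add_ne_top.2 ⟨fin _, fin _⟩⟩) key
end

section
/- Let (X,μ) be a standard probability space, g : X → X a Borel bijection with Borel inverse, A ⊆ X a Borel set and ε > 0. Then there exist N ∈ ℕ and a finite Borel partition {B_1, …, B_N, B_{N+1}} of A ∩ {x : g(x) ≠ x} such that μ(B_{N+1}) < ε and g(B_i) ∩ B_i = ∅ for all 1 ≤ i ≤ N. -/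
open MeasureTheory Set

/-- for a Borel bijection `g` (with Borel inverse) of a standard probability
space `(X,μ)`, a Borel set `A` and `ε > 0`, there is a finite Borel partition
`B_1, …, B_N, B_{N+1}` of `A ∩ supp g` with `μ(B_{N+1}) < ε` and `g(B_i) ∩ B_i = ∅`
for `1 ≤ i ≤ N`. -/
theorem exists_partition_support {X : Type*} [MeasurableSpace X] [StandardBorelSpace X]
    (μ : Measure X) [IsProbabilityMeasure μ] (g : X ≃ᵐ X)
    (A : Set X) (hA : MeasurableSet A) {ε : ℝ} (hε : 0 < ε) :
    ∃ (N : ℕ) (B : Fin (N + 1) → Set X),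
      (∀ i, MeasurableSet (B i)) ∧
      Pairwise (Function.onFun Disjoint B) ∧
      (⋃ i, B i) = A ∩ {x | g x ≠ x} ∧
      μ (B (Fin.last N)) < ENNReal.ofReal ε ∧
      ∀ i : Fin (N + 1), i ≠ Fin.last N → (⇑g) '' B i ∩ B i = ∅ := by
  classical
  -- a countable separating family of measurable sets
  obtain ⟨U, hUm, hUsep⟩ := exists_seq_separating X MeasurableSet.empty univ
  set S : Set X := A ∩ {x | g x ≠ x} with hSdef
  -- the family V n, each disjoint from its g-image
  set V : ℕ → Set X := fun n =>
    if Even n then (U (n / 2) \ g ⁻¹' U (n / 2)) else (g ⁻¹' U (n / 2) \ U (n / 2)) with hVdef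
  have hVm : ∀ n, MeasurableSet (V n) := by
    intro n
    simp only [hVdef]
    split
    · exact (hUm _).diff ((hUm _).preimage g.measurable)
    · exact ((hUm _).preimage g.measurable).diff (hUm _)
  have hVimg : ∀ n, ∀ C ⊆ V n, (⇑g) '' C ∩ C = ∅ := by
    intro n C hC
    ext y
    simp only [mem_inter_iff, mem_image, mem_empty_iff_false, iff_false, not_and]
    rintro ⟨x, hx, rfl⟩ hgx
    have hx' := hC hx
    have hgx' := hC hgx
    by_cases he : Even n
    · simp only [hVdef, if_pos he, mem_diff, mem_preimage] at hx' hgx'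
      exact hx'.2 hgx'.1
    · simp only [hVdef, if_neg he, mem_diff, mem_preimage] at hx' hgx'
      exact hgx'.2 hx'.1
  -- the support is exactly the union of the V's
  have hScov : ∀ x, g x ≠ x → x ∈ ⋃ n, V n := by
    intro x hgx
    have : ¬ ∀ n, x ∈ U n ↔ g x ∈ U n := by
      intro h
      exact hgx (hUsep x (mem_univ _) (g x) (mem_univ _) h).symm
    push_neg at this
    obtain ⟨n, hn⟩ := this
    rcases hn with ⟨hxU, hgxU⟩ | ⟨hxU, hgxU⟩
    · refine mem_iUnion.2 ⟨2 * n, ?_⟩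
      have he : Even (2 * n) := even_two_mul n
      have hdiv : 2 * n / 2 = n := by omega
      simp only [hVdef, if_pos he, hdiv, mem_diff, mem_preimage]
      exact ⟨hxU, hgxU⟩
    · refine mem_iUnion.2 ⟨2 * n + 1, ?_⟩
      have he : ¬ Even (2 * n + 1) := by simp [Nat.even_add_one, parity_simps]
      have hdiv : (2 * n + 1) / 2 = n := by omega
      simp only [hVdef, if_neg he, hdiv, mem_diff, mem_preimage]
      exact ⟨hgxU, hxU⟩
  have hVsub : ∀ n, ∀ x ∈ V n, g x ≠ x := by
    intro n x hx h
    by_cases he : Even n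
    · simp only [hVdef, if_pos he, mem_diff, mem_preimage] at hx
      rw [h] at hx
      exact hx.2 hx.1
    · simp only [hVdef, if_neg he, mem_diff, mem_preimage] at hx
      rw [h] at hx
      exact hx.2 hx.1
  have hSeq : S = A ∩ ⋃ n, V n := by
    apply Subset.antisymm
    · intro x hx
      exact ⟨hx.1, hScov x hx.2⟩
    · rintro x ⟨hxA, hxV⟩
      obtain ⟨n, hn⟩ := mem_iUnion.1 hxV
      exact ⟨hxA, hVsub n x hn⟩
  have hSm : MeasurableSet S := hSeq ▸ hA.inter (MeasurableSet.iUnion hVm)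
  -- disjointify
  set D : ℕ → Set X := fun n => S ∩ V n with hDdef
  have hDm : ∀ n, MeasurableSet (D n) := fun n => hSm.inter (hVm n)
  set C : ℕ → Set X := disjointed D with hCdef
  have hCm : ∀ n, MeasurableSet (C n) := MeasurableSet.disjointed hDm
  have hCdisj : Pairwise (Function.onFun Disjoint C) := disjoint_disjointed D
  have hCsub : ∀ n, C n ⊆ V n := fun n => (disjointed_subset D n).trans inter_subset_right
  have hCU : ⋃ n, C n = S := by
    rw [hCdef, iUnion_disjointed]
    simp only [hDdef, ← inter_iUnion]
    rw [hSeq]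
    exact (inter_eq_self_of_subset_left (fun x hx => hx.2 : A ∩ (⋃ n, V n) ⊆ ⋃ n, V n))
  -- choose N so that the tail has small measure
  have hsum : ∑' n, μ (C n) ≠ ⊤ := by
    rw [← measure_iUnion hCdisj hCm]
    exact (measure_lt_top μ _).ne
  have htail := ENNReal.tendsto_sum_nat_add (fun n => μ (C n)) hsum
  have hεpos : (0 : ENNReal) < ENNReal.ofReal ε := ENNReal.ofReal_pos.2 hε
  obtain ⟨N, hNtail⟩ := (htail.eventually (gt_mem_nhds hεpos)).exists
  -- build the partition
  set T : Set X := ⋃ (k : ℕ), C (k + N) with hTdef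
  refine ⟨N, fun i => if (i : ℕ) < N then C i else T, ?_, ?_, ?_, ?_, ?_⟩
  · intro i
    dsimp only
    split
    · exact hCm _
    · exact MeasurableSet.iUnion fun k => hCm _
  · intro i j hij
    have key : ∀ m l : ℕ, m ≠ l → Disjoint (C m) (C l) := fun m l h => hCdisj h
    simp only [Function.onFun]
    by_cases hi : (i : ℕ) < N <;> by_cases hj : (j : ℕ) < N
    · rw [if_pos hi, if_pos hj]
      exact key _ _ (fun h => hij (Fin.ext h))
    · rw [if_pos hi, if_neg hj, hTdef, disjoint_iUnion_right]
      exact fun k => key _ _ (by omega)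
    · rw [if_neg hi, if_pos hj, hTdef, disjoint_iUnion_left]
      exact fun k => key _ _ (by omega)
    · exact absurd (Fin.ext (by omega)) hij
  · rw [← hCU]
    apply Subset.antisymm
    · apply iUnion_subset
      intro i
      split
      · exact subset_iUnion C _
      · exact iUnion_subset fun k => subset_iUnion C (k + N)
    · apply iUnion_subset
      intro n
      by_cases hn : n < N
      · refine subset_iUnion_of_subset (⟨n, by omega⟩ : Fin (N + 1)) ?_
        simp [hn]
      · refine subset_iUnion_of_subset (Fin.last N) ?_
        simp only [Fin.val_last, lt_self_iff_false, if_false]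
        have : n = (n - N) + N := by omega
        rw [hTdef, this]
        exact subset_iUnion (fun k : ℕ => C (k + N)) (n - N)
  · simp only [Fin.val_last, lt_self_iff_false, if_false]
    exact lt_of_le_of_lt (measure_iUnion_le _) hNtail
  · intro i hi
    have hiN : (i : ℕ) < N := by
      have := i.isLt
      have : (i : ℕ) ≠ N := fun h => hi (Fin.ext (by simpa using h))
      omega
    simp only [if_pos hiN]
    exact hVimg _ _ (hCsub _)
end

section
/- Let (X,μ) be a standard probability space, g : X → X a Borel bijection with Borel inverse, n ≥ 1, σ a permutation of [n] = {0,…,n−1}, and let φ be a map assigning to each Borel subset A ⊆ X a subset φ(A) ⊆ [n] such that: (i) #φ(A)/n = μ(A) for every Borel A; (ii) φ(A ∪ B) = φ(A) ∪ φ(B) for all disjoint Borel sets A, B; (iii) φ(g(A)) = σ(φ(A)) for every Borel A. Then for every Borel A ⊆ X, #{i ∈ φ(A) : σ(i) = i}/n ≤ μ({x ∈ A : g(x) = x}). Moreover, if in addition #{i : σ(i) = i}/n = μ({x : g(x) = x}), then equality #{i ∈ φ(A) : σ(i) = i}/n = μ({x ∈ A : g(x) = x}) holds for every Borel A. -/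
open MeasureTheory Set

private lemma exists_point_of_atom {X : Type*} [MeasurableSpace X] [StandardBorelSpace X]
    (μ : Measure X) (C : Set X) (hC : MeasurableSet C) (hCtop : μ C ≠ ⊤) (hC0 : μ C ≠ 0)
    (hatom : ∀ D, D ⊆ C → MeasurableSet D → μ D = 0 ∨ μ D = μ C) :
    ∃ x ∈ C, μ (C \ {x}) = 0 := by
  obtain ⟨S, hSm, hSsep⟩ := exists_seq_separating X MeasurableSet.empty univ
  set T : ℕ → Set X := fun k => if μ (C ∩ S k) = μ C then C ∩ S k else C \ S k with hT
  have hTsub : ∀ k, T k ⊆ C := by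
    intro k; rw [hT]; dsimp only; split_ifs
    exacts [inter_subset_left, diff_subset]
  have hTm : ∀ k, MeasurableSet (T k) := by
    intro k; rw [hT]; dsimp only; split_ifs
    exacts [hC.inter (hSm k), hC.diff (hSm k)]
  have hTμ : ∀ k, μ (T k) = μ C := by
    intro k
    rw [hT]; dsimp only; split_ifs with h
    · exact h
    · rcases hatom (C \ S k) diff_subset (hC.diff (hSm k)) with h0' | h1'
      · exfalso
        rcases hatom (C ∩ S k) inter_subset_left (hC.inter (hSm k)) with h0 | h1
        · have hle : μ C ≤ μ (C ∩ S k) + μ (C \ S k) := by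
            refine (measure_mono ?_).trans (measure_union_le _ _)
            intro x hx; by_cases hxS : x ∈ S k <;> simp [hxS, hx]
          rw [h0, h0'] at hle; simp only [add_zero, nonpos_iff_eq_zero] at hle
          exact hC0 hle
        · exact h h1
      · exact h1'
  have hdiffnull : ∀ k, μ (C \ T k) = 0 := by
    intro k
    have := measure_diff (hTsub k) (hTm k).nullMeasurableSet (by rw [hTμ k]; exact hCtop)
    rw [this, hTμ k, tsub_self]
  set K := ⋂ k, T k with hK
  have hKsub : K ⊆ C := (iInter_subset _ 0).trans (hTsub 0)
  have hCK : μ (C \ K) = 0 := by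
    have hsub : C \ K ⊆ ⋃ k, (C \ T k) := by
      intro x hx
      rcases hx with ⟨hxC, hxK⟩
      rw [hK, mem_iInter] at hxK; push_neg at hxK
      obtain ⟨k, hk⟩ := hxK
      exact mem_iUnion.2 ⟨k, hxC, hk⟩
    exact le_antisymm ((measure_mono hsub).trans (measure_iUnion_null hdiffnull).le) (by simp)
  have hKμ : μ K ≠ 0 := by
    intro h0
    apply hC0
    have hle : μ C ≤ μ K + μ (C \ K) := by
      refine (measure_mono ?_).trans (measure_union_le _ _)
      intro x hx; by_cases h : x ∈ K <;> simp [h, hx]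
    rw [h0, hCK, add_zero] at hle
    exact nonpos_iff_eq_zero.1 hle
  obtain ⟨x, hxK⟩ := nonempty_of_measure_ne_zero hKμ
  refine ⟨x, hKsub hxK, ?_⟩
  have hKx : K ⊆ {x} := by
    intro y hyK
    have hyx : y = x := by
      refine hSsep y (mem_univ y) x (mem_univ x) ?_
      intro k
      have hy := mem_iInter.1 hyK k
      have hx' := mem_iInter.1 hxK k
      rw [hT] at hy hx'; dsimp only at hy hx'
      split_ifs at hy hx' with h
      · exact ⟨fun _ => hx'.2, fun _ => hy.2⟩
      · exact ⟨fun hyS => absurd hyS hy.2, fun hxS => absurd hxS hx'.2⟩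
    exact hyx
  have : C \ {x} ⊆ C \ K := diff_subset_diff_right hKx
  exact le_antisymm ((measure_mono this).trans hCK.le) (by simp)

/-- finitary covariance lemma. If `φ` sends Borel subsets of `(X,μ)` to
subsets of `[n]` preserving normalized measure and disjoint unions, and intertwines a
Borel bijection `g` with a permutation `σ`, then `#{i ∈ φ(A) : σ i = i}/n ≤
μ{x ∈ A : g x = x}` for every Borel `A`; and if moreover `tr σ = tr g`, equality holds. -/
theorem fixedPoints_le_of_covariant {X : Type*} [MeasurableSpace X] [StandardBorelSpace X]
    (μ : Measure X) [IsProbabilityMeasure μ] (g : X ≃ᵐ X)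
    (n : ℕ) (hn : 1 ≤ n) (σ : Equiv.Perm (Fin n)) (φ : Set X → Finset (Fin n))
    (hmeas : ∀ A : Set X, MeasurableSet A → ((φ A).card : ℝ) / n = (μ A).toReal)
    (hunion : ∀ A B : Set X, MeasurableSet A → MeasurableSet B → Disjoint A B →
      φ (A ∪ B) = φ A ∪ φ B)
    (hcov : ∀ A : Set X, MeasurableSet A → φ ((⇑g) '' A) = (φ A).image σ) :
    (∀ A : Set X, MeasurableSet A →
      (((φ A).filter fun i => σ i = i).card : ℝ) / n ≤ (μ {x ∈ A | g x = x}).toReal) ∧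
    ((((Finset.univ.filter fun i => σ i = i).card : ℝ) / n = (μ {x | g x = x}).toReal) →
      ∀ A : Set X, MeasurableSet A →
        (((φ A).filter fun i => σ i = i).card : ℝ) / n = (μ {x ∈ A | g x = x}).toReal) := by
  classical
  have hn0 : (0 : ℝ) < n := by exact_mod_cast hn
  have hfin : ∀ A : Set X, μ A ≠ ⊤ := fun A => measure_ne_top μ A
  -- disjoint sets have disjoint φ-images
  have hdisj : ∀ A B : Set X, MeasurableSet A → MeasurableSet B → Disjoint A B →
      Disjoint (φ A) (φ B) := by
    intro A B hA hB hAB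
    have h1 : ((φ (A ∪ B)).card : ℝ) / n = (μ (A ∪ B)).toReal := hmeas _ (hA.union hB)
    have h2 : (μ (A ∪ B)).toReal = (μ A).toReal + (μ B).toReal := by
      rw [measure_union hAB hB, ENNReal.toReal_add (hfin A) (hfin B)]
    rw [hunion A B hA hB hAB, h2, ← hmeas A hA, ← hmeas B hB, ← add_div] at h1
    have hcards : ((φ A ∪ φ B).card : ℝ) = (φ A).card + (φ B).card := by
      field_simp at h1
      exact_mod_cast h1
    have hcards' : (φ A ∪ φ B).card = (φ A).card + (φ B).card := by exact_mod_cast hcards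
    have := Finset.card_union_add_card_inter (φ A) (φ B)
    rw [hcards'] at this
    have hint : (φ A ∩ φ B).card = 0 := by omega
    rw [Finset.disjoint_iff_inter_eq_empty]
    exact Finset.card_eq_zero.1 hint
  -- splitting a measurable set
  have hsplit : ∀ A D : Set X, MeasurableSet A → MeasurableSet D → D ⊆ A →
      φ A = φ D ∪ φ (A \ D) := by
    intro A D hA hD hDA
    have := hunion D (A \ D) hD (hA.diff hD) disjoint_sdiff_self_right
    rw [union_diff_cancel hDA] at this
    exact this
  -- empty φ iff null
  have hzero : ∀ A : Set X, MeasurableSet A → (φ A = ∅ ↔ μ A = 0) := by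
    intro A hA
    have h := hmeas A hA
    constructor
    · intro he
      rw [he] at h
      simp only [Finset.card_empty, Nat.cast_zero, zero_div] at h
      exact (ENNReal.toReal_eq_zero_iff _).1 h.symm |>.resolve_right (hfin A)
    · intro h0
      rw [h0] at h
      simp only [ENNReal.toReal_zero] at h
      have hc : ((φ A).card : ℝ) = 0 := by
        rcases div_eq_zero_iff.1 h with h' | h'
        · exact h'
        · exact absurd h' (by positivity)
      have hc' : (φ A).card = 0 := by exact_mod_cast hc
      exact Finset.card_eq_zero.1 hc'
  -- g preserves μ
  have hgm : ∀ A : Set X, MeasurableSet A → MeasurableSet ((⇑g) '' A) :=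
    fun A hA => g.measurableSet_image.2 hA
  have hgpres : ∀ A : Set X, MeasurableSet A → μ ((⇑g) '' A) = μ A := by
    intro A hA
    have h1 := hmeas _ (hgm A hA)
    rw [hcov A hA, Finset.card_image_of_injective _ σ.injective, hmeas A hA] at h1
    exact (ENNReal.toReal_eq_toReal_iff' (hfin _) (hfin _)).1 h1.symm
  -- core lemma: no σ-fixed points in φ of a g-fixed-point-free set
  have hcore : ∀ B : Set X, MeasurableSet B → (∀ x ∈ B, g x ≠ x) →
      ∀ i ∈ φ B, σ i ≠ i := by
    intro B hB hBfree i hiB hσi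
    -- minimal cardinality of φ C over measurable C ⊆ B containing i
    set P : ℕ → Prop := fun k => ∃ C : Set X, C ⊆ B ∧ MeasurableSet C ∧ i ∈ φ C ∧ (φ C).card = k
      with hP
    have hPex : ∃ k, P k := ⟨(φ B).card, B, subset_rfl, hB, hiB, rfl⟩
    obtain ⟨C, hCB, hC, hiC, hCcard⟩ := Nat.find_spec hPex
    -- sub-lemma: subsets of C containing i have null complement in C
    have hsub : ∀ D : Set X, D ⊆ C → MeasurableSet D → i ∈ φ D → μ (C \ D) = 0 := by
      intro D hDC hD hiD
      have hle : Nat.find hPex ≤ (φ D).card :=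
        Nat.find_min' hPex ⟨D, hDC.trans hCB, hD, hiD, rfl⟩
      have hspl := hsplit C D hC hD hDC
      have hdd := hdisj D (C \ D) hD (hC.diff hD) disjoint_sdiff_self_right
      have hcards : (φ C).card = (φ D).card + (φ (C \ D)).card := by
        rw [hspl, Finset.card_union_of_disjoint hdd]
      have : (φ (C \ D)).card = 0 := by omega
      exact (hzero _ (hC.diff hD)).1 (Finset.card_eq_zero.1 this)
    -- C is an atom
    have hatom : ∀ D : Set X, D ⊆ C → MeasurableSet D → μ D = 0 ∨ μ D = μ C := by
      intro D hDC hD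
      have hspl := hsplit C D hC hD hDC
      rw [hspl] at hiC
      rcases Finset.mem_union.1 hiC with hiD | hiCD
      · right
        have h0 := hsub D hDC hD hiD
        have hle : μ C ≤ μ D := by
          calc μ C ≤ μ D + μ (C \ D) := by
                refine (measure_mono ?_).trans (measure_union_le _ _)
                intro x hx; by_cases h : x ∈ D <;> simp [h, hx]
          _ = μ D := by rw [h0, add_zero]
        exact le_antisymm (measure_mono hDC) hle
      · left
        have h0 := hsub (C \ D) diff_subset (hC.diff hD) hiCD
        rwa [diff_diff_cancel_left hDC] at h0
    have hiC' : i ∈ φ C := by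
      have hspl := hsplit C C hC hC subset_rfl
      exact hiC
    have hμC0 : μ C ≠ 0 := by
      intro h0
      have := (hzero C hC).2 h0
      rw [this] at hiC'
      exact absurd hiC' (Finset.notMem_empty i)
    obtain ⟨x, hxC, hxnull⟩ := exists_point_of_atom μ C hC (hfin C) hμC0 hatom
    have hgx : g x ≠ x := hBfree x (hCB hxC)
    have hμx : μ {x} = μ C := by
      have hle : μ C ≤ μ {x} := by
        calc μ C ≤ μ (C \ {x}) + μ {x} := by
              refine (measure_mono ?_).trans (measure_union_le _ _)
              intro y hy; by_cases h : y = x <;> simp [h, hy]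
        _ = μ {x} := by rw [hxnull, zero_add]
      exact le_antisymm (measure_mono (singleton_subset_iff.2 hxC)) hle
    -- i is in φ of g '' C
    have higC : i ∈ φ ((⇑g) '' C) := by
      rw [hcov C hC]
      exact Finset.mem_image.2 ⟨i, hiC', hσi⟩
    set D : Set X := C ∩ (⇑g) '' C with hD
    have hDm : MeasurableSet D := hC.inter (hgm C hC)
    by_cases hiD : i ∈ φ D
    · -- Case 1
      have h1 : μ (C \ D) = 0 := hsub D inter_subset_left hDm hiD
      have hμD : μ D = μ C := by
        have hle : μ C ≤ μ D := by
          calc μ C ≤ μ D + μ (C \ D) := by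
                refine (measure_mono ?_).trans (measure_union_le _ _)
                intro y hy; by_cases h : y ∈ D <;> simp [h, hy]
          _ = μ D := by rw [h1, add_zero]
        exact le_antisymm (measure_mono inter_subset_left) hle
      have hxD : x ∈ D := by
        by_contra hxD
        have : D ⊆ C \ {x} := by
          intro y hy
          exact ⟨hy.1, fun h => hxD (by rwa [mem_singleton_iff.1 h] at hy)⟩
        have := (measure_mono this).trans hxnull.le
        rw [hμD] at this
        exact hμC0 (nonpos_iff_eq_zero.1 this)
      have hxgC : x ∈ (⇑g) '' C := hxD.2
      have hxne : x ∈ ((⇑g) '' C) \ {g x} := ⟨hxgC, fun h => hgx (mem_singleton_iff.1 h).symm⟩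
      have hnull2 : μ (((⇑g) '' C) \ {g x}) = 0 := by
        have himg : ((⇑g) '' C) \ {g x} = (⇑g) '' (C \ {x}) := by
          rw [image_diff g.injective, image_singleton]
        rw [himg, hgpres _ (hC.diff (measurableSet_singleton x))]
        exact hxnull
      have : μ {x} ≤ 0 := (measure_mono (singleton_subset_iff.2 hxne)).trans hnull2.le
      rw [hμx] at this
      exact hμC0 (nonpos_iff_eq_zero.1 this)
    · -- Case 2
      have hiCD : i ∈ φ (C \ D) := by
        have hspl := hsplit C D hC hDm inter_subset_left
        rw [hspl] at hiC'
        exact (Finset.mem_union.1 hiC').resolve_left hiD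
      have hiGD : i ∈ φ (((⇑g) '' C) \ D) := by
        have hspl := hsplit ((⇑g) '' C) D (hgm C hC) hDm inter_subset_right
        rw [hspl] at higC
        exact (Finset.mem_union.1 higC).resolve_left hiD
      have hdsj : Disjoint (C \ D) (((⇑g) '' C) \ D) := by
        rw [Set.disjoint_left]
        rintro y ⟨hyC, hyD⟩ ⟨hygC, _⟩
        exact hyD ⟨hyC, hygC⟩
      have := hdisj _ _ (hC.diff hDm) ((hgm C hC).diff hDm) hdsj
      exact (Finset.disjoint_left.1 this) hiCD hiGD
  -- the fixed point set of g
  have hF : MeasurableSet {x : X | g x = x} := by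
    letI := upgradeStandardBorel X
    exact g.measurable.stronglyMeasurable.measurableSet_eq_fun stronglyMeasurable_id
  set F : Set X := {x : X | g x = x} with hFdef
  have hsep : ∀ A : Set X, {x ∈ A | g x = x} = A ∩ F := fun A => rfl
  -- main inequality, with identification of the filter
  have hkey : ∀ A : Set X, MeasurableSet A →
      (φ A).filter (fun i => σ i = i) = (φ (A ∩ F)).filter (fun i => σ i = i) ∧
      Disjoint (φ (A ∩ F)) (φ (A \ F)) := by
    intro A hA
    have hAF : MeasurableSet (A ∩ F) := hA.inter hF
    have hANF : MeasurableSet (A \ F) := hA.diff hF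
    have hspl : φ A = φ (A ∩ F) ∪ φ (A \ F) := by
      have := hsplit A (A ∩ F) hA hAF inter_subset_left
      rw [diff_self_inter] at this
      exact this
    have hd := hdisj _ _ hAF hANF (disjoint_sdiff_self_right.mono_left inter_subset_right)
    have hfree : ∀ x ∈ A \ F, g x ≠ x := fun x hx => hx.2
    have hempt : (φ (A \ F)).filter (fun i => σ i = i) = ∅ := by
      rw [Finset.filter_eq_empty_iff]
      intro i hi
      exact hcore (A \ F) hANF hfree i hi
    constructor
    · rw [hspl, Finset.filter_union, hempt, Finset.union_empty]
    · exact hd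
  have hineq : ∀ A : Set X, MeasurableSet A →
      (((φ A).filter fun i => σ i = i).card : ℝ) / n ≤ (μ {x ∈ A | g x = x}).toReal := by
    intro A hA
    obtain ⟨hfilt, _⟩ := hkey A hA
    rw [hsep A, hfilt, ← hmeas _ (hA.inter hF)]
    have hle : ((φ (A ∩ F)).filter (fun i => σ i = i)).card ≤ (φ (A ∩ F)).card :=
      Finset.card_filter_le _ _
    exact div_le_div_of_nonneg_right (by exact_mod_cast hle) hn0.le
  refine ⟨hineq, ?_⟩
  -- equality case
  intro htr A hA
  have hAc : MeasurableSet Aᶜ := hA.compl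
  have hφuniv : φ univ = Finset.univ := by
    have h := hmeas univ MeasurableSet.univ
    rw [measure_univ] at h
    simp only [ENNReal.toReal_one] at h
    have hcard : ((φ univ).card : ℝ) = n := by
      field_simp at h; exact_mod_cast h
    have hcard' : (φ univ).card = n := by exact_mod_cast hcard
    apply Finset.eq_univ_of_card
    rw [hcard', Fintype.card_fin]
  have hsplU : φ univ = φ A ∪ φ Aᶜ := by
    have := hsplit univ A MeasurableSet.univ hA (subset_univ A)
    rwa [← compl_eq_univ_diff] at this
  have hdU : Disjoint (φ A) (φ Aᶜ) := hdisj A Aᶜ hA hAc disjoint_compl_right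
  have hcardsum : ((Finset.univ.filter fun i => σ i = i).card : ℝ)
      = ((φ A).filter fun i => σ i = i).card + ((φ Aᶜ).filter fun i => σ i = i).card := by
    rw [← hφuniv, hsplU, Finset.filter_union,
      Finset.card_union_of_disjoint (hdU.mono (Finset.filter_subset _ _) (Finset.filter_subset _ _))]
    push_cast; ring
  have hmeassum : (μ F).toReal = (μ (A ∩ F)).toReal + (μ (Aᶜ ∩ F)).toReal := by
    have h := measure_inter_add_diff (μ := μ) F hA
    have e1 : F ∩ A = A ∩ F := inter_comm _ _
    have e2 : F \ A = Aᶜ ∩ F := by rw [diff_eq, inter_comm]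
    rw [e1, e2] at h
    rw [← h, ENNReal.toReal_add (hfin _) (hfin _)]
  have h1 := hineq A hA
  have h2 := hineq Aᶜ hAc
  rw [hsep A] at h1 ⊢
  rw [hsep Aᶜ] at h2
  have htr' : ((Finset.univ.filter fun i => σ i = i).card : ℝ) / n = (μ F).toReal := htr
  rw [hcardsum, hmeassum, add_div] at htr'
  linarith
end

section
/- Let (X,μ) be a standard probability space, g : X → X a Borel bijection with Borel inverse, n ≥ 1, σ a permutation of [n] = {0,…,n−1}, and let φ be a map assigning to each Borel subset A ⊆ X a subset φ(A) ⊆ [n] such that: (i) #φ(A)/n = μ(A) for every Borel A; (ii) φ(A ∪ B) = φ(A) ∪ φ(B) for all disjoint Borel sets A, B; (iii) φ(g(A)) = σ(φ(A)) for every Borel A; and assume #{i : σ(i) = i}/n = μ({x : g(x) = x}). If A ⊆ X is a Borel set with g(x) = x for all x ∈ A, then σ(i) = i for all i ∈ φ(A). -/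
open MeasureTheory Set

/-- if `φ` sends Borel subsets of `(X,μ)` to subsets of `[n]` preserving
normalized measure and disjoint unions, intertwines a Borel bijection `g` with a
permutation `σ`, and `σ` has the same trace as `g`, then `φ` sends any Borel set of
fixed points of `g` into the fixed points of `σ`. -/
theorem mem_fixedPoints_of_covariant {X : Type*} [MeasurableSpace X] [StandardBorelSpace X]
    (μ : Measure X) [IsProbabilityMeasure μ] (g : X ≃ᵐ X)
    (n : ℕ) (hn : 1 ≤ n) (σ : Equiv.Perm (Fin n)) (φ : Set X → Finset (Fin n))
    (hmeas : ∀ A : Set X, MeasurableSet A → ((φ A).card : ℝ) / n = (μ A).toReal)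
    (hunion : ∀ A B : Set X, MeasurableSet A → MeasurableSet B → Disjoint A B →
      φ (A ∪ B) = φ A ∪ φ B)
    (hcov : ∀ A : Set X, MeasurableSet A → φ ((⇑g) '' A) = (φ A).image σ)
    (htr : ((Finset.univ.filter fun i => σ i = i).card : ℝ) / n = (μ {x | g x = x}).toReal)
    (A : Set X) (hA : MeasurableSet A) (hfix : ∀ x ∈ A, g x = x) :
    ∀ i ∈ φ A, σ i = i := by
  classical
  letI := upgradeStandardBorel X
  have hn0 : (0:ℝ) < n := by exact_mod_cast hn
  set F : Set X := {x | g x = x} with hFdef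
  have hFm : MeasurableSet F := MeasureTheory.StronglyMeasurable.measurableSet_eq_fun
    g.measurable.stronglyMeasurable measurable_id.stronglyMeasurable
  -- card formula
  have hcard : ∀ B : Set X, MeasurableSet B → ((φ B).card : ℝ) = (μ B).toReal * n :=
    fun B hB => (div_eq_iff (ne_of_gt hn0)).mp (hmeas B hB)
  -- φ sends disjoint sets to disjoint finsets
  have hφdisj : ∀ B C : Set X, MeasurableSet B → MeasurableSet C → Disjoint B C →
      Disjoint (φ B) (φ C) := by
    intro B C hB hC hBC
    have h1 : ((φ (B ∪ C)).card : ℝ) = (φ B).card + (φ C).card := by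
      rw [hcard _ (hB.union hC), hcard _ hB, hcard _ hC,
        measure_union hBC hC, ENNReal.toReal_add (measure_ne_top μ B) (measure_ne_top μ C)]
      ring
    have h2 : (φ (B ∪ C)).card = (φ B).card + (φ C).card := by exact_mod_cast h1
    rw [hunion B C hB hC hBC] at h2
    have h3 := Finset.card_union_add_card_inter (φ B) (φ C)
    have h4 : ((φ B) ∩ (φ C)).card = 0 := by omega
    rw [Finset.disjoint_iff_inter_eq_empty]
    exact Finset.card_eq_zero.mp h4
  -- null sets go to the empty set
  have hφnull : ∀ B : Set X, MeasurableSet B → μ B = 0 → φ B = ∅ := by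
    intro B hB h0
    have h := hcard B hB
    rw [h0] at h
    simp only [ENNReal.toReal_zero, zero_mul, Nat.cast_eq_zero] at h
    exact Finset.card_eq_zero.mp h
  -- monotonicity
  have hφmono : ∀ B C : Set X, MeasurableSet B → MeasurableSet C → B ⊆ C → φ B ⊆ φ C := by
    intro B C hB hC hBC
    have h : φ C = φ B ∪ φ (C \ B) := by
      rw [← hunion B (C \ B) hB (hC.diff hB) disjoint_sdiff_right, union_diff_cancel hBC]
    rw [h]; exact Finset.subset_union_left
  -- a set disjoint from its image has no σ-fixed index
  have hfree : ∀ B : Set X, MeasurableSet B → Disjoint ((⇑g) '' B) B →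
      ∀ i ∈ φ B, σ i ≠ i := by
    intro B hB hd i hi hσ
    have hBim : MeasurableSet ((⇑g) '' B) := g.measurableSet_image.2 hB
    have hdd := hφdisj _ _ hBim hB hd
    rw [hcov B hB] at hdd
    exact (Finset.disjoint_left.mp hdd (Finset.mem_image.mpr ⟨i, hi, hσ⟩)) hi
  -- the non-fixed part
  set C : Set X := Fᶜ with hCdef
  have hCm : MeasurableSet C := hFm.compl
  -- a countable separating family
  obtain ⟨S, hScnt, hSmeas, hSsep⟩ := exists_countable_separating X MeasurableSet univ
  obtain ⟨f, hf⟩ : ∃ f : ℕ → Set X, insert ∅ S = range f :=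
    ((hScnt.insert ∅).exists_eq_range ⟨∅, mem_insert _ _⟩)
  have hfm : ∀ m, MeasurableSet (f m) := by
    intro m
    have : f m ∈ insert ∅ S := by rw [hf]; exact mem_range_self m
    rcases this with h | h
    · rw [h]; exact MeasurableSet.empty
    · exact hSmeas _ h
  -- the pieces
  set V : ℕ → Set X := fun k =>
    if Even k then C ∩ f (k / 2) ∩ (⇑g) ⁻¹' (f (k / 2))ᶜ
    else C ∩ (f (k / 2))ᶜ ∩ (⇑g) ⁻¹' (f (k / 2)) with hVdef
  have hVeven : ∀ m, V (2 * m) = C ∩ f m ∩ (⇑g) ⁻¹' (f m)ᶜ := by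
    intro m
    rw [hVdef]
    dsimp only
    rw [if_pos (even_two_mul m)]
    have h2 : 2 * m / 2 = m := by omega
    rw [h2]
  have hVodd : ∀ m, V (2 * m + 1) = C ∩ (f m)ᶜ ∩ (⇑g) ⁻¹' (f m) := by
    intro m
    rw [hVdef]
    dsimp only
    rw [if_neg (by simp [Nat.even_add_one, Nat.even_mul])]
    have h2 : (2 * m + 1) / 2 = m := by omega
    rw [h2]
  have hVm : ∀ k, MeasurableSet (V k) := by
    intro k
    rw [hVdef]
    dsimp only
    split_ifs
    · exact (hCm.inter (hfm _)).inter (g.measurable (hfm _).compl)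
    · exact (hCm.inter (hfm _).compl).inter (g.measurable (hfm _))
  have hVsub : ∀ k, V k ⊆ C := by
    intro k x hx
    rw [hVdef] at hx
    dsimp only at hx
    split_ifs at hx with h
    · exact hx.1.1
    · exact hx.1.1
  have hVfree : ∀ k, ∀ x ∈ V k, g x ∉ V k := by
    intro k x hx hgx
    rw [hVdef] at hx hgx
    dsimp only at hx hgx
    split_ifs at hx hgx with h
    · exact hx.2 hgx.1.2
    · exact hgx.1.2 hx.2
  have hVcover : C ⊆ ⋃ k, V k := by
    intro x hx
    have hxg : g x ≠ x := hx
    have hns : ¬ (∀ s ∈ S, x ∈ s ↔ g x ∈ s) := by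
      intro h
      exact hxg (hSsep (g x) (mem_univ _) x (mem_univ _)
        (fun s hs => (h s hs).symm))
    push_neg at hns
    obtain ⟨s, hsS, hsx⟩ := hns
    obtain ⟨m, hm⟩ : ∃ m, f m = s := by
      have : s ∈ range f := by rw [← hf]; exact mem_insert_of_mem _ hsS
      exact this
    rcases hsx with ⟨hxs, hgxs⟩ | ⟨hxs, hgxs⟩
    · refine mem_iUnion.mpr ⟨2 * m, ?_⟩
      rw [hVeven m, hm]
      exact ⟨⟨hx, hxs⟩, hgxs⟩
    · refine mem_iUnion.mpr ⟨2 * m + 1, ?_⟩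
      rw [hVodd m, hm]
      exact ⟨⟨hx, hxs⟩, hgxs⟩
  have hVUnion : (⋃ k, V k) = C := Subset.antisymm (iUnion_subset hVsub) hVcover
  -- disjointify
  set D : ℕ → Set X := disjointed V with hDdef
  have hDm : ∀ k, MeasurableSet (D k) := MeasurableSet.disjointed hVm
  have hDsub : ∀ k, D k ⊆ V k := disjointed_subset V
  have hDdisj : Pairwise (Function.onFun Disjoint D) := disjoint_disjointed V
  have hDUnion : (⋃ k, D k) = C := by rw [hDdef, iUnion_disjointed, hVUnion]
  have hDfree : ∀ k, ∀ i ∈ φ (D k), σ i ≠ i := by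
    intro k
    refine hfree (D k) (hDm k) ?_
    rw [Set.disjoint_left]
    rintro y ⟨x, hx, rfl⟩ hgx
    exact hVfree k x (hDsub k hx) (hDsub k hgx)
  -- countable additivity
  have hμC : μ C = ∑' m, μ (D m) := by
    rw [← hDUnion, measure_iUnion hDdisj hDm]
  have htsum : (μ C).toReal = ∑' m, (μ (D m)).toReal := by
    rw [hμC, ENNReal.tsum_toReal_eq (fun m => measure_ne_top μ (D m))]
  -- only finitely many pieces are non-null
  have hsummable : Summable (fun m => (μ (D m)).toReal) := by
    refine ENNReal.summable_toReal ?_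
    rw [← hμC]
    exact measure_ne_top μ C
  have hev : ∃ M : ℕ, ∀ m, M ≤ m → (μ (D m)).toReal = 0 := by
    have h0 : Filter.Tendsto (fun m => (μ (D m)).toReal) Filter.atTop (nhds 0) :=
      hsummable.tendsto_atTop_zero
    have h1 : ∀ᶠ m in Filter.atTop, (μ (D m)).toReal < 1 / n :=
      h0.eventually_lt_const (by positivity)
    obtain ⟨M, hM⟩ := Filter.eventually_atTop.mp h1
    refine ⟨M, fun m hm => ?_⟩
    have h2 := hmeas (D m) (hDm m)
    have h3 : ((φ (D m)).card : ℝ) / n < 1 / n := h2 ▸ hM m hm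
    have h4 : ((φ (D m)).card : ℝ) < 1 := by
      have h := mul_lt_mul_of_pos_right h3 hn0
      rw [div_mul_cancel₀ _ (ne_of_gt hn0), div_mul_cancel₀ _ (ne_of_gt hn0)] at h
      exact h
    have h5 : (φ (D m)).card = 0 := by exact_mod_cast Nat.lt_one_iff.mp (by exact_mod_cast h4)
    rw [← h2, h5]
    simp
  obtain ⟨M, hM⟩ := hev
  -- the finite union W exhausts C up to a null set
  set W : Set X := ⋃ k, ⋃ (_ : k < M), D k with hWdef
  have hWm : MeasurableSet W := MeasurableSet.iUnion fun k => MeasurableSet.iUnion fun _ => hDm k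
  have hWsub : W ⊆ C := iUnion_subset fun k => iUnion_subset fun _ => (hDsub k).trans (hVsub k)
  -- φ of the finite union
  have hφW : ∀ N : ℕ, φ (⋃ k, ⋃ (_ : k < N), D k) = (Finset.range N).biUnion fun m => φ (D m) := by
    intro N
    induction N with
    | zero =>
        simp only [Nat.not_lt_zero, iUnion_of_empty, iUnion_empty, Finset.range_zero,
          Finset.biUnion_empty]
        exact hφnull ∅ MeasurableSet.empty (measure_empty)
    | succ N ih =>
        rw [biUnion_lt_succ]
        have hWN : MeasurableSet (⋃ k, ⋃ (_ : k < N), D k) :=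
          MeasurableSet.iUnion fun k => MeasurableSet.iUnion fun _ => hDm k
        have hdisjN : Disjoint (⋃ k, ⋃ (_ : k < N), D k) (D N) := by
          refine disjoint_iUnion_left.mpr fun k => disjoint_iUnion_left.mpr fun hk => ?_
          exact hDdisj (Nat.ne_of_lt hk)
        rw [hunion _ _ hWN (hDm N) hdisjN, ih, Finset.range_add_one, Finset.biUnion_insert]
        exact Finset.union_comm _ _
  -- μ W = μ C
  have hWeq : W = ⋃ m ∈ Finset.range M, D m := by
    ext x; simp [hWdef, Finset.mem_range]
  have hμWsum : μ W = ∑ m ∈ Finset.range M, μ (D m) := by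
    rw [hWeq]
    exact measure_biUnion_finset (fun i _ j _ hij => hDdisj hij) (fun b _ => hDm b)
  have hμW : (μ W).toReal = (μ C).toReal := by
    rw [hμWsum, ENNReal.toReal_sum (fun a _ => measure_ne_top μ (D a)), htsum]
    exact (tsum_eq_sum (fun b hb => hM b (by simpa [Finset.mem_range, not_lt] using hb))).symm
  have hμWC : μ W = μ C :=
    (ENNReal.toReal_eq_toReal_iff' (measure_ne_top μ W) (measure_ne_top μ C)).mp hμW
  have hnullCW : μ (C \ W) = 0 := by
    rw [measure_diff hWsub hWm.nullMeasurableSet (measure_ne_top μ W), hμWC, tsub_self]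
  have hφCW : φ (C \ W) = ∅ := hφnull _ (hCm.diff hWm) hnullCW
  have hφC : φ C = φ W := by
    have h : φ C = φ W ∪ φ (C \ W) := by
      rw [← hunion W (C \ W) hWm (hCm.diff hWm) disjoint_sdiff_right, union_diff_cancel hWsub]
    rw [h, hφCW, Finset.union_empty]
  -- no index of φ C is fixed by σ
  have hCavoid : ∀ i ∈ φ C, σ i ≠ i := by
    intro i hi
    rw [hφC, hWdef, hφW M] at hi
    obtain ⟨m, _, him⟩ := Finset.mem_biUnion.mp hi
    exact hDfree m i him
  -- φ univ = univ
  have hφuniv : φ univ = Finset.univ := by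
    refine Finset.eq_univ_of_card _ ?_
    have h := hcard univ MeasurableSet.univ
    rw [measure_univ] at h
    simp only [ENNReal.toReal_one, one_mul] at h
    have : (φ univ).card = n := by exact_mod_cast h
    rw [this, Fintype.card_fin]
  -- φ F ∪ φ C = univ
  have hsplit : Finset.univ = φ F ∪ φ C := by
    rw [← hφuniv, ← hunion F C hFm hCm disjoint_compl_right, union_compl_self]
  -- the fixed points of σ
  set Fix : Finset (Fin n) := Finset.univ.filter fun i => σ i = i with hFixdef
  have hFixcard : Fix.card = (φ F).card := by
    have h1 : ((Fix.card : ℝ)) / n = ((φ F).card : ℝ) / n := by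
      rw [htr, hmeas F hFm]
    field_simp at h1
    exact_mod_cast h1
  have hFixsub : Fix ⊆ φ F := by
    intro i hi
    have hσi : σ i = i := (Finset.mem_filter.mp hi).2
    have : i ∈ φ F ∪ φ C := by rw [← hsplit]; exact Finset.mem_univ i
    rcases Finset.mem_union.mp this with h | h
    · exact h
    · exact absurd hσi (hCavoid i h)
  have hFeq : Fix = φ F := Finset.eq_of_subset_of_card_le hFixsub (le_of_eq hFixcard.symm)
  -- conclude
  intro i hi
  have hAF : A ⊆ F := fun x hx => hfix x hx
  have hiF : i ∈ φ F := hφmono A F hA hFm hAF hi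
  rw [← hFeq] at hiF
  exact (Finset.mem_filter.mp hiF).2
end

section
/- Let X be a standard Borel space, μ a Borel probability measure on X, and R ⊆ X × X a countable Borel equivalence relation (R is a Borel subset of X × X, is an equivalence relation, and every class R(x) = {y : (x,y) ∈ R} is countable). Then there exists a Borel bijection α : X → X with Borel inverse such that (x, α(x)) ∈ R for all x ∈ X and, up to a μ-null set, {x : α(x) ≠ x} = Per_{≥2}(R) := {x ∈ X : R(x) has at least two elements}. -/
open MeasureTheory Set
open scoped ENNReal ProbabilityTheory

namespace AutSupportPer

/-! ### Outer continuity and capacity lemma -/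

/-- Outer-measure continuity from below for an increasing sequence of arbitrary sets. -/
lemma measure_iUnion_monotone {α : Type*} [MeasurableSpace α] (μ : Measure α)
    {s : ℕ → Set α} (hs : Monotone s) : μ (⋃ n, s n) = ⨆ n, μ (s n) :=
  hs.measure_iUnion

/-- The Choquet-capacity style lemma: a Borel subset of `ℝ × ℝ` contains a compact
subset whose first-coordinate projection captures almost all of the (outer) measure of the
projection of `W`. -/
lemma exists_compact_subset_measure_fst_image (μ : Measure ℝ) [IsFiniteMeasure μ]
    {W : Set (ℝ × ℝ)} (hW : MeasurableSet W) {ε : ℝ≥0∞} (hε : ε ≠ 0) :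
    ∃ K, IsCompact K ∧ K ⊆ W ∧ μ (Prod.fst '' W) ≤ μ (Prod.fst '' K) + ε := by
  classical
  rcases eq_empty_or_nonempty W with hWe | hWne
  · exact ⟨∅, isCompact_empty, by simp [hWe], by simp [hWe]⟩
  have hana : MeasureTheory.AnalyticSet W := hW.analyticSet
  rw [MeasureTheory.AnalyticSet] at hana
  rcases hana with h | ⟨σ, hσc, hσr⟩
  · exact absurd h hWne.ne_empty
  set c : Set (ℕ → ℕ) → ℝ≥0∞ := fun S => μ (Prod.fst '' (σ '' S)) with hcdef
  have hcmono : ∀ S T : Set (ℕ → ℕ), S ⊆ T → c S ≤ c T := fun S T h =>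
    measure_mono (image_mono (image_mono h))
  have hδ : ∀ n : ℕ, (ε / 2 * 2⁻¹ ^ n : ℝ≥0∞) ≠ 0 := by
    intro n
    refine mul_ne_zero ?_ (pow_ne_zero _ (ENNReal.inv_ne_zero.2 ENNReal.ofNat_ne_top))
    simp only [ne_eq, ENNReal.div_eq_zero_iff, not_or]
    exact ⟨hε, ENNReal.ofNat_ne_top⟩
  have hsum : ∀ n : ℕ, (∑ i ∈ Finset.range n, (ε / 2 * 2⁻¹ ^ i : ℝ≥0∞)) ≤ ε := by
    intro n
    rw [← Finset.mul_sum]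
    have h1 : (∑ i ∈ Finset.range n, ((2 : ℝ≥0∞)⁻¹) ^ i) ≤ 2 := by
      refine le_trans (ENNReal.sum_le_tsum _) ?_
      rw [ENNReal.tsum_geometric, ENNReal.one_sub_inv_two, inv_inv]
    calc ε / 2 * (∑ i ∈ Finset.range n, ((2 : ℝ≥0∞)⁻¹) ^ i) ≤ ε / 2 * 2 :=
        mul_le_mul_right h1 _
      _ = ε := ENNReal.div_mul_cancel (two_ne_zero) ENNReal.ofNat_ne_top
  have hstep : ∀ (S : Set (ℕ → ℕ)) (n : ℕ) (δ : ℝ≥0∞), δ ≠ 0 →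
      ∃ m : ℕ, c S ≤ c (S ∩ {z | z n ≤ m}) + δ := by
    intro S n δ hδ'
    have hmon : Monotone (fun m : ℕ => S ∩ {z | z n ≤ m}) := by
      intro a b hab w hw
      exact ⟨hw.1, le_trans hw.2 hab⟩
    have hunion : (⋃ m : ℕ, (S ∩ {z | z n ≤ m})) = S := by
      ext w; simp only [mem_iUnion, mem_inter_iff, mem_setOf_eq]
      exact ⟨fun ⟨m, hm⟩ => hm.1, fun hw => ⟨w n, hw, le_refl _⟩⟩
    have hsup : c S = ⨆ m : ℕ, c (S ∩ {z | z n ≤ m}) := by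
      have him : Prod.fst '' (σ '' S) = ⋃ m : ℕ, Prod.fst '' (σ '' (S ∩ {z | z n ≤ m})) := by
        conv_lhs => rw [← hunion]
        rw [image_iUnion, image_iUnion]
      show μ (Prod.fst '' (σ '' S)) = ⨆ m : ℕ, μ (Prod.fst '' (σ '' (S ∩ {z | z n ≤ m})))
      rw [him]
      exact Monotone.measure_iUnion (fun a b hab => image_mono (image_mono (hmon hab)))
    by_cases hle : c S ≤ δ
    · exact ⟨0, le_trans hle le_add_self⟩
    · push_neg at hle
      have hfin : c S ≠ ⊤ := measure_ne_top μ _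
      have h1 : c S - δ < ⨆ m : ℕ, c (S ∩ {z | z n ≤ m}) := by
        rw [← hsup]
        exact ENNReal.sub_lt_self hfin (fun h0 => by simp [h0] at hle) hδ'
      obtain ⟨m, hm⟩ := lt_iSup_iff.1 h1
      exact ⟨m, tsub_le_iff_right.1 hm.le⟩
  -- recursive construction of the sequence of constrained sets
  have hstep' : ∀ (S : Set (ℕ → ℕ)) (n : ℕ),
      ∃ m : ℕ, c S ≤ c (S ∩ {z | z n ≤ m}) + ε / 2 * 2⁻¹ ^ n := fun S n =>
    hstep S n _ (hδ n)
  set step : Set (ℕ → ℕ) → ℕ → ℕ := fun S n => (hstep' S n).choose with hstepdef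
  set Qs : ℕ → Set (ℕ → ℕ) :=
    fun n => Nat.rec univ (fun n S => S ∩ {z | z n ≤ step S n}) n with hQsdef
  have hQsucc : ∀ n, Qs (n + 1) = Qs n ∩ {z | z n ≤ step (Qs n) n} := fun n => rfl
  set v : ℕ → ℕ := fun n => step (Qs n) n with hv
  have hQbound : ∀ n, Qs n = {z | ∀ i < n, z i ≤ v i} := by
    intro n
    induction n with
    | zero => ext z; simp [hQsdef]
    | succ n ih =>
      ext z
      rw [hQsucc]
      constructor
      · rintro ⟨h1, h2⟩
        have h1' : ∀ i < n, z i ≤ v i := by rw [ih] at h1; exact h1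
        intro i hi
        rcases Nat.lt_succ_iff_lt_or_eq.1 hi with hi' | rfl
        · exact h1' i hi'
        · exact h2
      · intro h
        refine ⟨?_, ?_⟩
        · rw [ih]; exact fun i hi => h i (Nat.lt_succ_of_lt hi)
        · exact h n (Nat.lt_succ_self n)
  have hinv : ∀ n, c univ ≤ c (Qs n) + ∑ i ∈ Finset.range n, (ε / 2 * 2⁻¹ ^ i : ℝ≥0∞) := by
    intro n
    induction n with
    | zero =>
      simp only [Finset.range_zero, Finset.sum_empty, add_zero]
      exact le_of_eq rfl
    | succ n ih =>
      have h2 : c (Qs n) ≤ c (Qs (n + 1)) + ε / 2 * 2⁻¹ ^ n := (hstep' (Qs n) n).choose_spec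
      rw [Finset.sum_range_succ]
      calc c univ ≤ c (Qs n) + ∑ i ∈ Finset.range n, (ε / 2 * 2⁻¹ ^ i : ℝ≥0∞) := ih
        _ ≤ (c (Qs (n + 1)) + ε / 2 * 2⁻¹ ^ n) + ∑ i ∈ Finset.range n, (ε / 2 * 2⁻¹ ^ i : ℝ≥0∞) :=
            add_le_add_left h2 _
        _ = c (Qs (n + 1)) + (∑ i ∈ Finset.range n, (ε / 2 * 2⁻¹ ^ i : ℝ≥0∞) + ε / 2 * 2⁻¹ ^ n) :=
            by ring
  have hinv' : ∀ n, μ (Prod.fst '' W) ≤ c (Qs n) + ε := by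
    intro n
    have h0 : μ (Prod.fst '' W) = c univ := by
      rw [hcdef]
      simp only [image_univ, hσr]
    rw [h0]
    exact le_trans (hinv n) (add_le_add_right (hsum n) _)
  -- the compact set
  set Qinf : Set (ℕ → ℕ) := {z | ∀ i, z i ≤ v i} with hQinf
  have hQinfsub : ∀ n, Qinf ⊆ Qs n := by
    intro n
    rw [hQbound n]
    intro z hz i _
    exact hz i
  have hQinfc : IsCompact Qinf := by
    have : Qinf = Set.pi univ (fun i => Iic (v i)) := by
      ext z; simp [hQinf, Set.pi]
    rw [this]
    exact isCompact_univ_pi (fun i => (Set.finite_Iic (v i)).isCompact)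
  refine ⟨σ '' Qinf, hQinfc.image hσc, by rw [← hσr]; exact image_subset_range σ _, ?_⟩
  set C : ℕ → Set ℝ := fun n => closure (Prod.fst '' (σ '' Qs n)) with hC
  have hCanti : Antitone C := by
    intro a b hab
    refine closure_mono (image_mono (image_mono ?_))
    rw [hQbound a, hQbound b]
    intro z hz i hi
    exact hz i (lt_of_lt_of_le hi hab)
  have htend : Filter.Tendsto (fun n => μ (C n)) Filter.atTop (nhds (μ (⋂ n, C n))) :=
    tendsto_measure_iInter_atTop (fun n => isClosed_closure.measurableSet.nullMeasurableSet)
      hCanti ⟨0, measure_ne_top μ _⟩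
  have hmicro : (⋂ n, C n) ⊆ Prod.fst '' (σ '' Qinf) := by
    intro x hx
    have hxn : ∀ n : ℕ, ∃ z, z ∈ Qs n ∧ dist x (Prod.fst (σ z)) < 1 / (n + 1) := by
      intro n
      have hxC : x ∈ C n := mem_iInter.1 hx n
      have hd := Metric.mem_closure_iff.1 hxC (1 / (n + 1)) (by positivity)
      obtain ⟨y, hy, hdist⟩ := hd
      obtain ⟨p, ⟨z, hzQ, rfl⟩, rfl⟩ := hy
      exact ⟨z, hzQ, hdist⟩
    choose z hzQ hzdist using hxn
    set y : ℕ → ℕ → ℕ := fun n i => min (z n i) (v i) with hy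
    have hyQ : ∀ n, y n ∈ Qinf := fun n i => min_le_right _ _
    obtain ⟨w, hw, φ, hφ, hconv⟩ := hQinfc.isSeqCompact hyQ
    have hz_tend : Filter.Tendsto (fun j => z (φ j)) Filter.atTop (nhds w) := by
      rw [tendsto_pi_nhds]
      intro i
      have hyi : Filter.Tendsto (fun j => y (φ j) i) Filter.atTop (nhds (w i)) :=
        (tendsto_pi_nhds.1 hconv) i
      refine hyi.congr' ?_
      filter_upwards [Filter.eventually_ge_atTop (i + 1)] with j hj
      have hij : i < φ j := lt_of_lt_of_le (Nat.lt_succ_self i) (le_trans hj hφ.le_apply)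
      have hb : z (φ j) i ≤ v i := by
        have hmem := hzQ (φ j)
        rw [hQbound] at hmem
        exact hmem i hij
      simp only [hy, min_eq_left hb]
    have hσ_tend : Filter.Tendsto (fun j => σ (z (φ j))) Filter.atTop (nhds (σ w)) :=
      ((hσc.tendsto w).comp hz_tend)
    have hfst_tend : Filter.Tendsto (fun j => Prod.fst (σ (z (φ j)))) Filter.atTop
        (nhds (Prod.fst (σ w))) := (continuous_fst.tendsto _).comp hσ_tend
    have hfst_tend' : Filter.Tendsto (fun j => Prod.fst (σ (z (φ j)))) Filter.atTop (nhds x) := by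
      rw [tendsto_iff_dist_tendsto_zero]
      refine squeeze_zero (g := fun j : ℕ => 1 / ((j : ℝ) + 1)) (fun j => dist_nonneg)
        (fun j => ?_) tendsto_one_div_add_atTop_nhds_zero_nat
      rw [dist_comm]
      refine le_trans (hzdist (φ j)).le ?_
      have h2 : j ≤ φ j := hφ.le_apply
      have h1 : (j : ℝ) + 1 ≤ (φ j : ℝ) + 1 := by
        have h3 := (Nat.cast_le (α := ℝ)).2 h2
        linarith
      exact one_div_le_one_div_of_le (by positivity) h1
    have heq : Prod.fst (σ w) = x := tendsto_nhds_unique hfst_tend hfst_tend'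
    exact ⟨σ w, ⟨w, hw, rfl⟩, heq⟩
  have hfinal : μ (Prod.fst '' W) ≤ μ (⋂ n, C n) + ε := by
    have htend' : Filter.Tendsto (fun n => μ (C n) + ε) Filter.atTop
        (nhds (μ (⋂ n, C n) + ε)) := htend.add tendsto_const_nhds
    refine ge_of_tendsto' htend' (fun n => ?_)
    refine le_trans (hinv' n) (add_le_add_left ?_ ε)
    exact measure_mono (subset_closure)
  exact le_trans hfinal (add_le_add_left (measure_mono hmicro) ε)

/-- A compact subset of the plane admits a Borel selector for its first-coordinate fibers. -/
lemma exists_selector_of_isCompact {K : Set (ℝ × ℝ)} (hK : IsCompact K) :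
    ∃ s : ℝ → ℝ, Measurable s ∧ ∀ x ∈ Prod.fst '' K, (x, s x) ∈ K := by
  classical
  set P := Prod.fst '' K with hP
  set sec : ℝ → Set ℝ := fun x => {y | (x, y) ∈ K} with hsec
  have hsecc : ∀ x, IsCompact (sec x) := by
    intro x
    have hcl : IsClosed (sec x) := hK.isClosed.preimage (Continuous.prodMk_right x)
    refine (hK.image continuous_snd).of_isClosed_subset hcl ?_
    intro y hy
    exact ⟨(x, y), hy, rfl⟩
  have hne : ∀ x ∈ P, (sec x).Nonempty := by
    rintro x ⟨p, hp, rfl⟩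
    exact ⟨p.2, hp⟩
  set s : ℝ → ℝ := fun x => if x ∈ P then sInf (sec x) else x with hsdef
  have hmem : ∀ x ∈ P, (x, s x) ∈ K := by
    intro x hx
    have : sInf (sec x) ∈ sec x := (hsecc x).sInf_mem (hne x hx)
    simp only [hsdef, if_pos hx]
    exact this
  refine ⟨s, ?_, hmem⟩
  refine measurable_of_Iio (fun t => ?_)
  have hproj : ∀ t : ℝ, MeasurableSet (Prod.fst '' (K ∩ (univ ×ˢ Iio t))) := by
    intro t
    have : Prod.fst '' (K ∩ (univ ×ˢ Iio t)) =
        ⋃ (q : {q : ℚ // (q : ℝ) < t}), Prod.fst '' (K ∩ (univ ×ˢ Iic (q : ℝ))) := by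
      ext x
      simp only [mem_image, mem_iUnion, mem_inter_iff, mem_prod, mem_univ, true_and, mem_Iio,
        mem_Iic]
      constructor
      · rintro ⟨p, ⟨hpK, hpt⟩, rfl⟩
        obtain ⟨q, hq1, hq2⟩ := exists_rat_btwn hpt
        exact ⟨⟨q, hq2⟩, p, ⟨hpK, hq1.le⟩, rfl⟩
      · rintro ⟨⟨q, hq⟩, p, ⟨hpK, hpq⟩, rfl⟩
        exact ⟨p, ⟨hpK, lt_of_le_of_lt hpq hq⟩, rfl⟩
    rw [this]
    refine MeasurableSet.iUnion (fun q => ?_)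
    have hcomp : IsCompact (K ∩ (univ ×ˢ Iic (q : ℝ))) :=
      hK.inter_right (isClosed_univ.prod isClosed_Iic)
    exact (hcomp.image continuous_fst).isClosed.measurableSet
  have key : s ⁻¹' (Iio t) = (P ∩ Prod.fst '' (K ∩ (univ ×ˢ Iio t))) ∪ (Pᶜ ∩ Iio t) := by
    ext x
    simp only [mem_preimage, mem_Iio, mem_union, mem_inter_iff, mem_compl_iff]
    by_cases hx : x ∈ P
    · simp only [hsdef, if_pos hx, hx, true_and, not_true, false_and, or_false]
      constructor
      · intro hlt
        obtain ⟨y, hy, hyt⟩ := (csInf_lt_iff (hsecc x).bddBelow (hne x hx)).1 hlt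
        exact ⟨(x, y), ⟨hy, mem_prod.2 ⟨mem_univ _, hyt⟩⟩, rfl⟩
      · rintro ⟨p, ⟨hpK, hpt⟩, rfl⟩
        calc sInf (sec p.1) ≤ p.2 := csInf_le (hsecc p.1).bddBelow hpK
          _ < t := hpt.2
    · simp only [hsdef, if_neg hx, hx, false_and, not_false_iff, true_and, false_or]
  rw [key]
  exact ((hK.image continuous_fst).isClosed.measurableSet.inter (hproj t)).union
    (((hK.image continuous_fst).isClosed.measurableSet.compl).inter measurableSet_Iio)

/-- Measurable left inverse for a map which is measurable and injective on a Borel set. -/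
lemma exists_leftInv {γ α : Type*} [MeasurableSpace γ] [StandardBorelSpace γ]
    [MeasurableSpace α] [MeasurableSpace.CountablySeparated α] [Nonempty γ]
    {B : Set γ} (hB : MeasurableSet B) {f : γ → α} (hf : Measurable f)
    (hinj : InjOn f B) :
    ∃ r : α → γ, Measurable r ∧ ∀ x ∈ B, r (f x) = x := by
  classical
  set r : α → γ := fun z => if h : ∃ x ∈ B, f x = z then h.choose else Classical.arbitrary γ
    with hrdef
  have hrval : ∀ x ∈ B, r (f x) = x := by
    intro x hx
    have h : ∃ x' ∈ B, f x' = f x := ⟨x, hx, rfl⟩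
    simp only [hrdef, dif_pos h]
    exact hinj h.choose_spec.1 hx h.choose_spec.2
  refine ⟨r, ?_, hrval⟩
  intro S hS
  have him : ∀ (S' : Set γ), MeasurableSet S' → MeasurableSet (f '' (B ∩ S')) := fun S' hS' =>
    (hB.inter hS').image_of_measurable_injOn hf (hinj.mono inter_subset_left)
  have key : r ⁻¹' S =
      (f '' (B ∩ S)) ∪ ((f '' B)ᶜ ∩ (if Classical.arbitrary γ ∈ S then univ else (∅ : Set α))) := by
    ext z
    by_cases hz : ∃ x ∈ B, f x = z
    · obtain ⟨x, hx, hfx⟩ := hz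
      subst hfx
      have hrx : r (f x) = x := hrval x hx
      simp only [mem_preimage, hrx, mem_union, mem_inter_iff, mem_compl_iff, mem_image]
      constructor
      · intro hxS; exact Or.inl ⟨x, ⟨hx, hxS⟩, rfl⟩
      · rintro (⟨x', ⟨hx', hx'S⟩, hfx'⟩ | ⟨hnot, _⟩)
        · rwa [← hinj hx' hx hfx']
        · exact absurd ⟨x, hx, rfl⟩ hnot
    · have hrz : r z = Classical.arbitrary γ := by simp only [hrdef, dif_neg hz]
      have him' : z ∉ f '' B := by
        rintro ⟨x, hx, hfx⟩; exact hz ⟨x, hx, hfx⟩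
      have him'' : z ∉ f '' (B ∩ S) := fun hc => him' (image_mono (f := f) inter_subset_left hc)
      by_cases harb : Classical.arbitrary γ ∈ S <;>
        simp [mem_preimage, hrz, him', him'', harb]
  rw [key]
  refine ((him S hS).union ((((him univ MeasurableSet.univ).congr ?_).compl).inter ?_))
  · rw [inter_univ]
  · by_cases harb : Classical.arbitrary γ ∈ S <;> simp [harb]

/-- Positive-measure injectivization of a countable-to-one Borel map, via disintegration. -/
lemma exists_posMeasure_injOn (μ : Measure ℝ) [IsFiniteMeasure μ] {P : Set ℝ}
    (hP : MeasurableSet P) (hμP : μ P ≠ 0) {s : ℝ → ℝ} (hs : Measurable s)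
    (hfib : ∀ y, {x | x ∈ P ∧ s x = y}.Countable) :
    ∃ A, A ⊆ P ∧ MeasurableSet A ∧ μ A ≠ 0 ∧ InjOn s A := by
  classical
  set m : ℝ → ℝ × ℝ := fun x => (s x, x) with hm
  have hmm : Measurable m := hs.prodMk measurable_id
  set ρ : Measure (ℝ × ℝ) := Measure.map m (μ.restrict P) with hρ
  haveI : IsFiniteMeasure ρ := by
    refine ⟨?_⟩
    rw [hρ, Measure.map_apply hmm MeasurableSet.univ]
    exact measure_lt_top _ _
  set κ := ρ.condKernel with hκ
  set ν := ρ.fst with hν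
  -- joint measurability of the atom function
  set κ2 : ProbabilityTheory.Kernel (ℝ × ℝ) ℝ := κ.comap Prod.fst measurable_fst with hκ2
  have hκ2app : ∀ (p : ℝ × ℝ) (S : Set ℝ), κ2 p S = κ p.1 S := by
    intro p S
    rw [hκ2, ProbabilityTheory.Kernel.comap_apply]
  have hFmeas : Measurable (fun p : ℝ × ℝ => κ p.1 {p.2}) := by
    have ht : MeasurableSet {q : (ℝ × ℝ) × ℝ | q.2 = q.1.2} :=
      measurableSet_eq_fun measurable_snd (measurable_fst.snd)
    have hmk := ProbabilityTheory.Kernel.measurable_kernel_prodMk_left (κ := κ2) ht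
    have heqf : (fun p : (ℝ × ℝ) => κ2 p
        (Prod.mk p ⁻¹' {q : (ℝ × ℝ) × ℝ | q.2 = q.1.2})) = fun p : ℝ × ℝ => κ p.1 {p.2} := by
      ext p
      rw [hκ2app]
      have hpre : (Prod.mk p ⁻¹' {q : (ℝ × ℝ) × ℝ | q.2 = q.1.2}) = {p.2} := by
        ext z
        simp only [mem_preimage, mem_setOf_eq, mem_singleton_iff]
      rw [hpre]
    rwa [heqf] at hmk
  -- the band counting functions
  set qq : ℕ → ℝ≥0∞ := fun n => (1 : ℝ≥0∞) / (n + 1) with hqq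
  have hqq0 : ∀ n, qq n ≠ 0 := by
    intro n
    simp only [hqq, ne_eq, ENNReal.div_eq_zero_iff, one_ne_zero, false_or]
    exact ENNReal.add_ne_top.2 ⟨ENNReal.natCast_ne_top n, ENNReal.one_ne_top⟩
  have hqqt : ∀ n, qq n ≠ ⊤ := by
    intro n
    simp only [hqq]
    exact (ENNReal.div_lt_top ENNReal.one_ne_top (by simp)).ne
  set G : ℕ → ℝ × ℝ → ℝ≥0∞ := fun n p => κ p.1 {z | z < p.2 ∧ qq n < κ p.1 {z}} with hG
  have hGmeas : ∀ n, Measurable (G n) := by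
    intro n
    have ht : MeasurableSet {q : (ℝ × ℝ) × ℝ | q.2 < q.1.2 ∧ qq n < κ q.1.1 {q.2}} := by
      have h1 : MeasurableSet {q : (ℝ × ℝ) × ℝ | q.2 < q.1.2} :=
        measurableSet_lt measurable_snd (measurable_fst.snd)
      have h2 : MeasurableSet {q : (ℝ × ℝ) × ℝ | qq n < κ q.1.1 {q.2}} :=
        (hFmeas.comp ((measurable_fst.fst).prodMk measurable_snd)) measurableSet_Ioi
      exact h1.inter h2
    have hmk := ProbabilityTheory.Kernel.measurable_kernel_prodMk_left (κ := κ2) ht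
    have heqf : (fun p : (ℝ × ℝ) => κ2 p
        (Prod.mk p ⁻¹' {q : (ℝ × ℝ) × ℝ | q.2 < q.1.2 ∧ qq n < κ q.1.1 {q.2}})) = G n := by
      ext p
      rw [hκ2app]
      rfl
    rwa [heqf] at hmk
  have hGfin : ∀ n p, G n p ≠ ⊤ := fun n p => measure_ne_top _ _
  have hFfin : ∀ p : ℝ × ℝ, κ p.1 {p.2} ≠ ⊤ := fun p => measure_ne_top _ _
  -- the candidate sets
  set A : ℕ → ℕ → Set ℝ := fun n j =>
    {x | x ∈ P ∧ qq n < κ (s x) {x} ∧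
      (G n (s x, x)).toReal ∈ Ico ((j : ℝ) * (qq n).toReal) ((j + 1) * (qq n).toReal)} with hA
  have hAm : ∀ n j, MeasurableSet (A n j) := by
    intro n j
    have hset : A n j = P ∩ ({x | qq n < κ (s x) {x}} ∩
        {x | (G n (s x, x)).toReal ∈ Ico ((j : ℝ) * (qq n).toReal) ((j + 1) * (qq n).toReal)}) :=
      rfl
    rw [hset]
    refine hP.inter (MeasurableSet.inter ?_ ?_)
    · exact (hFmeas.comp hmm) measurableSet_Ioi
    · exact ((hGmeas n).comp hmm).ennreal_toReal measurableSet_Ico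
  have hAP : ∀ n j, A n j ⊆ P := fun n j x hx => hx.1
  -- injectivity on each A n j
  have hAinj : ∀ n j, InjOn s (A n j) := by
    intro n j x1 hx1 x2 hx2 heq
    by_contra hne
    have key : ∀ a b : ℝ, a ∈ A n j → b ∈ A n j → a < b → s a = s b → False := by
      intro a b ha hb hab hsab
      have hsub : ({z | z < a ∧ qq n < κ (s a) {z}} ∪ {a}) ⊆
          {z | z < b ∧ qq n < κ (s a) {z}} := by
        rintro z (hz | rfl)
        · exact ⟨lt_trans hz.1 hab, hz.2⟩
        · exact ⟨hab, ha.2.1⟩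
      have hdisj : Disjoint {z | z < a ∧ qq n < κ (s a) {z}} ({a} : Set ℝ) := by
        rw [disjoint_singleton_right]
        intro hc
        exact absurd hc.1 (lt_irrefl a)
      have hadd : G n (s a, a) + κ (s a) {a} ≤ G n (s a, b) := by
        have h1 : κ (s a) ({z | z < a ∧ qq n < κ (s a) {z}} ∪ {a}) =
            κ (s a) {z | z < a ∧ qq n < κ (s a) {z}} + κ (s a) {a} :=
          measure_union hdisj (measurableSet_singleton a)
        calc G n (s a, a) + κ (s a) {a}
            = κ (s a) ({z | z < a ∧ qq n < κ (s a) {z}} ∪ {a}) := h1.symm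
          _ ≤ κ (s a) {z | z < b ∧ qq n < κ (s a) {z}} := measure_mono hsub
          _ = G n (s a, b) := rfl
      -- pass to real numbers
      have hb2 : (G n (s a, b)).toReal < ((j : ℝ) + 1) * (qq n).toReal := by
        rw [hsab]
        exact hb.2.2.2
      have ha2 : ((j : ℝ)) * (qq n).toReal ≤ (G n (s a, a)).toReal := ha.2.2.1
      have hfa : (qq n).toReal < (κ (s a) {a}).toReal :=
        (ENNReal.toReal_lt_toReal (hqqt n) (hFfin (s a, a))).2 ha.2.1
      have htr : (G n (s a, a)).toReal + (κ (s a) {a}).toReal ≤ (G n (s a, b)).toReal := by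
        rw [← ENNReal.toReal_add (hGfin n (s a, a)) (hFfin (s a, a))]
        exact ENNReal.toReal_mono (hGfin n (s a, b)) hadd
      nlinarith
    rcases Ne.lt_or_gt hne with hlt | hlt
    · exact key x1 x2 hx1 hx2 hlt heq
    · exact key x2 x1 hx2 hx1 hlt heq.symm
  -- disintegration facts
  have hdis : ν ⊗ₘ κ = ρ := ρ.disintegrate ρ.condKernel
  set Gr : Set (ℝ × ℝ) := {p | p.2 ∈ P ∧ s p.2 = p.1} with hGr
  have hGrm : MeasurableSet Gr :=
    (hP.preimage measurable_snd).inter (measurableSet_eq_fun (hs.comp measurable_snd) measurable_fst)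
  have hρGr : ρ Grᶜ = 0 := by
    rw [hρ, Measure.map_apply hmm hGrm.compl]
    have hpre : m ⁻¹' Grᶜ = Pᶜ := by
      ext x
      simp [hm, hGr]
    rw [hpre, Measure.restrict_apply (hP.compl)]
    simp
  have hae : ∀ᵐ y ∂ν, κ y {x | ¬(x ∈ P ∧ s x = y)} = 0 := by
    have h0 : (ν ⊗ₘ κ) Grᶜ = 0 := by rw [hdis]; exact hρGr
    rw [Measure.compProd_apply hGrm.compl] at h0
    have := (lintegral_eq_zero_iff
      (ProbabilityTheory.Kernel.measurable_kernel_prodMk_left (κ := κ) hGrm.compl)).1 h0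
    filter_upwards [this] with y hy
    convert hy using 2
    all_goals rfl
  -- positivity of the atomic part
  set U : Set (ℝ × ℝ) := {p | 0 < κ p.1 {p.2}} with hU
  have hUm : MeasurableSet U := hFmeas measurableSet_Ioi
  have hρUc : ρ Uᶜ = 0 := by
    rw [← hdis, Measure.compProd_apply hUm.compl]
    rw [lintegral_eq_zero_iff
      (ProbabilityTheory.Kernel.measurable_kernel_prodMk_left (κ := κ) hUm.compl)]
    filter_upwards [hae] with y hy
    have hsub : (Prod.mk y ⁻¹' Uᶜ) ⊆
        {x | ¬(x ∈ P ∧ s x = y)} ∪ ({x | x ∈ P ∧ s x = y} ∩ {x | κ y {x} = 0}) := by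
      intro x hx
      by_cases hmem : x ∈ P ∧ s x = y
      · refine Or.inr ⟨hmem, ?_⟩
        have : ¬(0 < κ y {x}) := hx
        simpa using this
      · exact Or.inl hmem
    have hcnt : ({x | x ∈ P ∧ s x = y} ∩ {x | κ y {x} = 0}).Countable :=
      (hfib y).mono inter_subset_left
    have hzero : κ y ({x | x ∈ P ∧ s x = y} ∩ {x | κ y {x} = 0}) = 0 := by
      have hrw : ({x | x ∈ P ∧ s x = y} ∩ {x | κ y {x} = 0}) =
          ⋃ z ∈ ({x | x ∈ P ∧ s x = y} ∩ {x | κ y {x} = 0}), ({z} : Set ℝ) :=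
        (biUnion_of_singleton _).symm
      rw [hrw, measure_biUnion_null_iff hcnt]
      intro z hz
      exact hz.2
    exact le_antisymm (le_trans (measure_mono hsub) (measure_union_null hy hzero).le) (zero_le)
  have hmUpre : MeasurableSet (m ⁻¹' U) := hmm hUm
  have hμA0 : μ (m ⁻¹' U ∩ P) ≠ 0 := by
    have h1 : ρ U = μ (m ⁻¹' U ∩ P) := by
      rw [hρ, Measure.map_apply hmm hUm, Measure.restrict_apply hmUpre]
    have h2 : ρ univ = ρ U := by
      have h3 := measure_add_measure_compl (μ := ρ) hUm
      rw [hρUc, add_zero] at h3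
      exact h3.symm
    have h3 : ρ univ = μ P := by
      rw [hρ, Measure.map_apply hmm MeasurableSet.univ, preimage_univ,
        Measure.restrict_apply MeasurableSet.univ, univ_inter]
    rw [← h1, ← h2, h3]
    exact hμP
  have hcover : (m ⁻¹' U ∩ P) ⊆ ⋃ (nj : ℕ × ℕ), A nj.1 nj.2 := by
    rintro x ⟨hxU, hxP⟩
    have hpos : 0 < κ (s x) {x} := hxU
    obtain ⟨n0, hn0⟩ := ENNReal.exists_inv_nat_lt (ne_of_gt hpos)
    have hqlt : qq n0 < κ (s x) {x} := by
      refine lt_of_le_of_lt ?_ hn0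
      rw [hqq]
      simp only [one_div]
      exact ENNReal.inv_le_inv.2 (by exact_mod_cast Nat.le_succ n0)
    have hgr0 : 0 ≤ (G n0 (s x, x)).toReal := ENNReal.toReal_nonneg
    have hqr0 : 0 < (qq n0).toReal := ENNReal.toReal_pos (hqq0 n0) (hqqt n0)
    set j := ⌊(G n0 (s x, x)).toReal / (qq n0).toReal⌋₊ with hj
    refine mem_iUnion.2 ⟨(n0, j), hxP, hqlt, ?_, ?_⟩
    · have hfl := Nat.floor_le (div_nonneg hgr0 hqr0.le)
      calc (j : ℝ) * (qq n0).toReal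
          ≤ ((G n0 (s x, x)).toReal / (qq n0).toReal) * (qq n0).toReal :=
            mul_le_mul_of_nonneg_right hfl hqr0.le
        _ = (G n0 (s x, x)).toReal := div_mul_cancel₀ _ hqr0.ne'
    · have hfl := Nat.lt_floor_add_one ((G n0 (s x, x)).toReal / (qq n0).toReal)
      calc (G n0 (s x, x)).toReal
          = ((G n0 (s x, x)).toReal / (qq n0).toReal) * (qq n0).toReal :=
            (div_mul_cancel₀ _ hqr0.ne').symm
        _ < ((j : ℝ) + 1) * (qq n0).toReal := mul_lt_mul_of_pos_right hfl hqr0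
  have hex : ∃ nj : ℕ × ℕ, μ (A nj.1 nj.2) ≠ 0 := by
    by_contra hcon
    push_neg at hcon
    have hnull : μ (⋃ nj : ℕ × ℕ, A nj.1 nj.2) = 0 := measure_iUnion_null (fun nj => hcon nj)
    exact hμA0 (le_antisymm (le_trans (measure_mono hcover) hnull.le) (zero_le))
  obtain ⟨⟨n, j⟩, hnj⟩ := hex
  exact ⟨A n j, hAP n j, hAm n j, hnj, hAinj n j⟩

/-- A Borel coloring separating points from their images. -/
lemma exists_coloring {s : ℝ → ℝ} (hs : Measurable s) :
    ∃ c : ℝ → ℕ, Measurable c ∧ ∀ x, s x ≠ x → c x ≠ c (s x) := by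
  classical
  set e : ℕ → ℚ × ℚ := fun n => (Denumerable.eqv (ℚ × ℚ)).symm n with he
  set I : ℕ → Set ℝ := fun n => Ioo ((e n).1 : ℝ) ((e n).2 : ℝ) with hI
  have hsep : ∀ x y : ℝ, x ≠ y → ∃ n, x ∈ I n ∧ y ∉ I n := by
    intro x y hxy
    rcases hxy.lt_or_gt with h | h
    · obtain ⟨a, ha⟩ := exists_rat_lt x
      obtain ⟨b, hb1, hb2⟩ := exists_rat_btwn h
      refine ⟨Denumerable.eqv (ℚ × ℚ) (a, b), ?_, ?_⟩
      · simp only [hI, he, Equiv.symm_apply_apply]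
        exact ⟨ha, hb1⟩
      · simp only [hI, he, Equiv.symm_apply_apply, mem_Ioo, not_and]
        intro _; exact not_lt.2 hb2.le
    · obtain ⟨a, ha1, ha2⟩ := exists_rat_btwn h
      obtain ⟨b, hb⟩ := exists_rat_gt x
      refine ⟨Denumerable.eqv (ℚ × ℚ) (a, b), ?_, ?_⟩
      · simp only [hI, he, Equiv.symm_apply_apply]
        exact ⟨ha2, hb⟩
      · simp only [hI, he, Equiv.symm_apply_apply, mem_Ioo, not_and]
        intro hc; exact absurd hc (not_lt.2 ha1.le)
  set E : ℕ → Set ℝ := fun n => {x | x ∈ I n ∧ s x ∉ I n} with hE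
  have hEm : ∀ n, MeasurableSet (E n) := by
    intro n
    exact (measurableSet_Ioo.inter ((hs (measurableSet_Ioo.compl)).congr rfl)).congr rfl |>.congr rfl
  set c : ℝ → ℕ := fun x => if h : ∃ n, x ∈ E n then Nat.find h + 1 else 0 with hc
  have hc0 : c ⁻¹' {0} = (⋃ n, E n)ᶜ := by
    ext x
    simp only [mem_preimage, mem_singleton_iff, hc, mem_compl_iff, mem_iUnion]
    by_cases h : ∃ n, x ∈ E n
    · simp [dif_pos h, h]
    · simp [dif_neg h, h]
  have hck : ∀ k : ℕ, c ⁻¹' {k + 1} = E k \ ⋃ (m : ℕ) (_ : m < k), E m := by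
    intro k
    ext x
    simp only [mem_preimage, mem_singleton_iff, hc, mem_diff, mem_iUnion, not_exists]
    by_cases h : ∃ n, x ∈ E n
    · rw [dif_pos h]
      simp only [Nat.add_right_cancel_iff]
      rw [Nat.find_eq_iff h]
    · rw [dif_neg h]
      push_neg at h
      simp [h]
  have hcm : Measurable c := by
    refine measurable_to_countable' (fun k => ?_)
    cases k with
    | zero => rw [hc0]; exact (MeasurableSet.iUnion hEm).compl
    | succ k =>
      rw [hck]
      exact (hEm k).diff (MeasurableSet.iUnion fun m => MeasurableSet.iUnion fun _ => hEm m)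
  refine ⟨c, hcm, ?_⟩
  intro x hsx heq
  have h1 : ∃ n, x ∈ E n := hsep x (s x) (Ne.symm hsx)
  have hcx : c x = Nat.find h1 + 1 := by simp only [hc, dif_pos h1]
  have hspec := Nat.find_spec h1
  by_cases h2 : ∃ n, s x ∈ E n
  · have hcsx : c (s x) = Nat.find h2 + 1 := by simp only [hc, dif_pos h2]
    rw [hcx, hcsx, Nat.add_right_cancel_iff] at heq
    have hspec2 := Nat.find_spec h2
    rw [← heq] at hspec2
    exact hspec.2 hspec2.1
  · have hcsx : c (s x) = 0 := by simp only [hc, dif_neg h2]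
    rw [hcx, hcsx] at heq
    exact Nat.succ_ne_zero _ heq

/-- The engine: from any Borel `W` inside an "off-diagonal" relation with countable fibers whose
projection has positive outer measure, produce a Borel involution with positive-measure support
whose graph lies in `W` (up to a flip). -/
lemma engine (μ : Measure ℝ) [IsFiniteMeasure μ] {R W : Set (ℝ × ℝ)}
    (hCount' : ∀ y, {x | (x, y) ∈ R}.Countable)
    (hWR : W ⊆ R) (hW : MeasurableSet W) (hWd : ∀ p ∈ W, p.1 ≠ p.2)
    (hpos : μ (Prod.fst '' W) ≠ 0) :
    ∃ κ : ℝ → ℝ, Measurable κ ∧ (∀ x, κ (κ x) = x) ∧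
      (∀ x, κ x ≠ x → (x, κ x) ∈ W ∨ (κ x, x) ∈ W) ∧ μ {x | κ x ≠ x} ≠ 0 := by
  classical
  have hε : μ (Prod.fst '' W) / 2 ≠ 0 := by
    simp only [ne_eq, ENNReal.div_eq_zero_iff, not_or]
    exact ⟨hpos, ENNReal.ofNat_ne_top⟩
  obtain ⟨K, hKc, hKW, hKb⟩ := exists_compact_subset_measure_fst_image μ hW hε
  have hKpos : μ (Prod.fst '' K) ≠ 0 := by
    intro h0
    rw [h0, zero_add] at hKb
    have hfin : μ (Prod.fst '' W) ≠ ⊤ := measure_ne_top μ _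
    exact absurd hKb (not_le.2 (ENNReal.half_lt_self hpos hfin))
  obtain ⟨s, hsm, hsK⟩ := exists_selector_of_isCompact hKc
  set P := Prod.fst '' K with hPdef
  have hPm : MeasurableSet P := (hKc.image continuous_fst).isClosed.measurableSet
  have hsW : ∀ x ∈ P, (x, s x) ∈ W := fun x hx => hKW (hsK x hx)
  have hsne : ∀ x ∈ P, s x ≠ x := fun x hx => (hWd _ (hsW x hx)).symm
  have hfib : ∀ y, {x | x ∈ P ∧ s x = y}.Countable := by
    intro y
    refine (hCount' y).mono ?_
    intro x hx
    have hmem := hWR (hsW x hx.1)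
    rw [hx.2] at hmem
    exact hmem
  obtain ⟨A, hAP, hAm, hApos, hAinj⟩ := exists_posMeasure_injOn μ hPm hKpos hsm hfib
  obtain ⟨c, hcm, hcne⟩ := exists_coloring hsm
  set AC : ℕ × ℕ → Set ℝ := fun ij =>
    if ij.1 = ij.2 then ∅ else A ∩ {x | c x = ij.1} ∩ {x | c (s x) = ij.2} with hAC
  have hcov : A ⊆ ⋃ ij : ℕ × ℕ, AC ij := by
    intro x hx
    have hne := hcne x (hsne x (hAP hx))
    refine mem_iUnion.2 ⟨(c x, c (s x)), ?_⟩
    simp only [hAC, if_neg hne]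
    exact ⟨⟨hx, rfl⟩, rfl⟩
  have hex : ∃ ij : ℕ × ℕ, μ (AC ij) ≠ 0 := by
    by_contra hcon
    push_neg at hcon
    exact hApos (le_antisymm (le_trans (measure_mono hcov) (measure_iUnion_null hcon).le)
      (zero_le))
  obtain ⟨⟨i, j⟩, hij⟩ := hex
  have hijne : i ≠ j := by
    by_contra h
    rw [hAC] at hij
    simp [h] at hij
  set B := A ∩ {x | c x = i} ∩ {x | c (s x) = j} with hB
  have hBval : AC (i, j) = B := by
    simp only [hAC, if_neg hijne, hB]
  have hBm : MeasurableSet B :=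
    (hAm.inter (hcm (measurableSet_singleton i))).inter ((hcm.comp hsm) (measurableSet_singleton j))
  have hBpos : μ B ≠ 0 := hBval ▸ hij
  have hBA : B ⊆ A := fun x hx => hx.1.1
  have hBP : B ⊆ P := fun x hx => hAP hx.1.1
  have hBinj : InjOn s B := hAinj.mono hBA
  set C := s '' B with hC
  have hCm : MeasurableSet C := hBm.image_of_measurable_injOn hsm hBinj
  have hBCdisj : ∀ x, x ∈ B → x ∈ C → False := by
    intro x hxB hxC
    obtain ⟨x0, hx0B, rfl⟩ := hxC
    exact hijne (hxB.1.2.symm.trans hx0B.2)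
  obtain ⟨r, hrm, hrinv⟩ := exists_leftInv hBm hsm hBinj
  set κ : ℝ → ℝ := fun x => if x ∈ B then s x else if x ∈ C then r x else x with hκ
  have hκB : ∀ x ∈ B, κ x = s x := fun x hx => by simp only [hκ, if_pos hx]
  have hκC : ∀ x ∈ C, κ x = r x := by
    intro x hx
    have hxB : x ∉ B := fun h => hBCdisj x h hx
    simp only [hκ, if_neg hxB, if_pos hx]
  have hκother : ∀ x, x ∉ B → x ∉ C → κ x = x := by
    intro x h1 h2
    simp only [hκ, if_neg h1, if_neg h2]
  refine ⟨κ, ?_, ?_, ?_, ?_⟩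
  · have hκeq : κ = B.piecewise s (C.piecewise r id) := by
      ext x
      by_cases h1 : x ∈ B <;> by_cases h2 : x ∈ C <;> simp [hκ, Set.piecewise, h1, h2]
    rw [hκeq]
    exact Measurable.piecewise hBm hsm (Measurable.piecewise hCm hrm measurable_id)
  · intro x
    by_cases h1 : x ∈ B
    · have h2 : s x ∈ C := ⟨x, h1, rfl⟩
      rw [hκB x h1, hκC _ h2, hrinv x h1]
    · by_cases h2 : x ∈ C
      · obtain ⟨x0, hx0, rfl⟩ := h2
        rw [hκC _ ⟨x0, hx0, rfl⟩, hrinv x0 hx0, hκB x0 hx0]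
      · rw [hκother x h1 h2, hκother x h1 h2]
  · intro x hne
    by_cases h1 : x ∈ B
    · rw [hκB x h1]
      exact Or.inl (hsW x (hBP h1))
    · by_cases h2 : x ∈ C
      · obtain ⟨x0, hx0, rfl⟩ := h2
        rw [hκC _ ⟨x0, hx0, rfl⟩, hrinv x0 hx0]
        exact Or.inr (hsW x0 (hBP hx0))
      · exact absurd (hκother x h1 h2) hne
  · refine fun h0 => hBpos (le_antisymm (le_trans (measure_mono ?_) h0.le) (zero_le))
    intro x hx
    rw [mem_setOf_eq, hκB x hx]
    exact hsne x (hBP hx)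

/-- Glue countably many measurable functions along pairwise disjoint measurable pieces. -/
lemma glue_pieces {u : ℕ → Set ℝ} (hum : ∀ n, MeasurableSet (u n))
    (hdisj : ∀ m n, m ≠ n → u m ∩ u n = ∅) {f : ℕ → ℝ → ℝ} (hfm : ∀ n, Measurable (f n)) :
    ∃ g : ℝ → ℝ, Measurable g ∧ (∀ n x, x ∈ u n → g x = f n x) ∧
      ∀ x, (∀ n, x ∉ u n) → g x = x := by
  classical
  set g : ℝ → ℝ := fun x => if h : ∃ n, x ∈ u n then f (Nat.find h) x else x with hg
  have hon : ∀ n x, x ∈ u n → g x = f n x := by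
    intro n x hx
    have h : ∃ n, x ∈ u n := ⟨n, hx⟩
    have heq : Nat.find h = n := by
      by_contra hne
      have h1 := Nat.find_spec h
      exact absurd (mem_inter h1 hx) (by rw [hdisj _ _ hne]; exact notMem_empty x)
    simp only [hg, dif_pos h, heq]
  have hoff : ∀ x, (∀ n, x ∉ u n) → g x = x := by
    intro x hx
    simp only [hg, dif_neg (not_exists.2 hx)]
  refine ⟨g, ?_, hon, hoff⟩
  intro S hS
  have hkey : g ⁻¹' S = (⋃ n, u n ∩ f n ⁻¹' S) ∪ ((⋃ n, u n)ᶜ ∩ S) := by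
    ext x
    simp only [mem_preimage, mem_union, mem_iUnion, mem_inter_iff, mem_compl_iff, not_exists]
    by_cases h : ∃ n, x ∈ u n
    · obtain ⟨n, hn⟩ := h
      rw [hon n x hn]
      constructor
      · intro hfS
        exact Or.inl ⟨n, hn, hfS⟩
      · rintro (⟨m, hm, hmS⟩ | ⟨hno, _⟩)
        · have hmn : m = n := by
            by_contra hne
            exact absurd (mem_inter hm hn) (by rw [hdisj m n hne]; exact notMem_empty x)
          rwa [hmn] at hmS
        · exact absurd hn (hno n)
    · push_neg at h
      rw [hoff x h]
      constructor
      · intro hxS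
        exact Or.inr ⟨h, hxS⟩
      · rintro (⟨m, hm, _⟩ | ⟨_, hxS⟩)
        · exact absurd hm (h m)
        · exact hxS
  rw [hkey]
  refine (MeasurableSet.iUnion (fun n => (hum n).inter (hfm n hS))).union ?_
  exact (MeasurableSet.iUnion hum).compl.inter hS

/-- The main theorem over `ℝ`. -/
theorem main_real (μ : Measure ℝ) [IsProbabilityMeasure μ] (R : Set (ℝ × ℝ))
    (hR : MeasurableSet R) (hEquiv : Equivalence fun x y => (x, y) ∈ R)
    (hCount : ∀ x : ℝ, {y | (x, y) ∈ R}.Countable) :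
    ∃ α : ℝ ≃ᵐ ℝ, (∀ x, (x, α x) ∈ R) ∧
      μ (symmDiff {x | α x ≠ x} {x | Set.Nontrivial {y | (x, y) ∈ R}}) = 0 := by
  classical
  have hCount' : ∀ y, {x | (x, y) ∈ R}.Countable := fun y =>
    (hCount y).mono (fun x hx => hEquiv.symm hx)
  set Adm : (ℝ → ℝ) → Prop := fun κ => Measurable κ ∧ (∀ x, κ (κ x) = x) ∧ ∀ x, (x, κ x) ∈ R
    with hAdm
  have hAdmId : Adm id := ⟨measurable_id, fun x => rfl, fun x => hEquiv.refl x⟩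
  have hsupm : ∀ {κ : ℝ → ℝ}, Measurable κ → MeasurableSet {x | κ x ≠ x} := by
    intro κ hκ
    have : {x | κ x ≠ x} = {x | κ x = x}ᶜ := rfl
    rw [this]
    exact (measurableSet_eq_fun hκ measurable_id).compl
  -- the gain function and near-optimal choices
  set gain : Set ℝ → ℝ≥0∞ := fun T =>
    ⨆ (κ : {κ : ℝ → ℝ // Adm κ ∧ {x | κ x ≠ x} ∩ T = ∅}), μ {x | κ.1 x ≠ x} with hgain
  have hpick : ∀ T : Set ℝ, ∃ κ : ℝ → ℝ, (Adm κ ∧ {x | κ x ≠ x} ∩ T = ∅) ∧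
      gain T ≤ 2 * μ {x | κ x ≠ x} := by
    intro T
    by_cases h0 : gain T = 0
    · refine ⟨id, ⟨hAdmId, ?_⟩, by simp [h0]⟩
      have : {x | (id : ℝ → ℝ) x ≠ x} = ∅ := by
        ext x; simp
      rw [this, empty_inter]
    · have hfin : gain T ≠ ⊤ := by
        refine ne_top_of_le_ne_top (measure_ne_top μ univ) ?_
        exact iSup_le (fun κ => measure_mono (subset_univ _))
      have hhalf : gain T / 2 < gain T := ENNReal.half_lt_self h0 hfin
      rw [hgain] at hhalf
      obtain ⟨κ, hκlt⟩ := lt_iSup_iff.1 hhalf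
      refine ⟨κ.1, κ.2, ?_⟩
      calc gain T = 2 * (gain T / 2) := (ENNReal.mul_div_cancel two_ne_zero ENNReal.ofNat_ne_top).symm
        _ ≤ 2 * μ {x | κ.1 x ≠ x} := mul_le_mul_right hκlt.le _
  choose pick hpickadm hpickbound using hpick
  -- iterate
  set Ts : ℕ → Set ℝ := fun n => Nat.rec ∅ (fun _ T => T ∪ {x | pick T x ≠ x}) n with hTs
  have hTsucc : ∀ n, Ts (n + 1) = Ts n ∪ {x | pick (Ts n) x ≠ x} := fun n => rfl
  set κs : ℕ → ℝ → ℝ := fun n => pick (Ts n) with hκs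
  set u : ℕ → Set ℝ := fun n => {x | κs n x ≠ x} with hu
  have hκsAdm : ∀ n, Adm (κs n) := fun n => (hpickadm (Ts n)).1
  have hκsdisjT : ∀ n, u n ∩ Ts n = ∅ := fun n => (hpickadm (Ts n)).2
  have hTs_eq : ∀ n, Ts n = ⋃ (m : ℕ) (_ : m < n), u m := by
    intro n
    induction n with
    | zero => ext x; simp [hTs]
    | succ n ih =>
      rw [hTsucc]
      ext x
      constructor
      · intro hx
        rcases hx with hx | hx
        · rw [ih] at hx
          simp only [mem_iUnion] at hx
          obtain ⟨m, hm, hxm⟩ := hx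
          exact mem_iUnion.2 ⟨m, mem_iUnion.2 ⟨Nat.lt_succ_of_lt hm, hxm⟩⟩
        · exact mem_iUnion.2 ⟨n, mem_iUnion.2 ⟨Nat.lt_succ_self n, hx⟩⟩
      · intro hx
        simp only [mem_iUnion] at hx
        obtain ⟨m, hm, hxm⟩ := hx
        rcases Nat.lt_succ_iff_lt_or_eq.1 hm with h | rfl
        · exact Or.inl (by rw [ih]; exact mem_iUnion.2 ⟨m, mem_iUnion.2 ⟨h, hxm⟩⟩)
        · exact Or.inr hxm
  have hudisj : ∀ m n : ℕ, m ≠ n → u m ∩ u n = ∅ := by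
    have key : ∀ m n : ℕ, m < n → u m ∩ u n = ∅ := by
      intro m n hmn
      have h1 : u m ⊆ Ts n := by
        rw [hTs_eq n]
        intro x hx
        exact mem_iUnion.2 ⟨m, mem_iUnion.2 ⟨hmn, hx⟩⟩
      have h2 := hκsdisjT n
      ext x
      simp only [mem_inter_iff, mem_empty_iff_false, iff_false, not_and]
      intro hxm hxn
      exact absurd (mem_inter hxn (h1 hxm)) (by rw [h2]; exact notMem_empty x)
    intro m n hmn
    rcases hmn.lt_or_gt with h | h
    · exact key m n h
    · rw [inter_comm]; exact key n m h
  have hum : ∀ n, MeasurableSet (u n) := fun n => hsupm (hκsAdm n).1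
  obtain ⟨ι, hιm, hιon, hιoff⟩ := glue_pieces hum hudisj (fun n => (hκsAdm n).1)
  set TInf : Set ℝ := ⋃ n, u n with hTInf
  have hTInfm : MeasurableSet TInf := MeasurableSet.iUnion hum
  have hsupp_ι : ∀ x, ι x ≠ x ↔ x ∈ TInf := by
    intro x
    constructor
    · intro hx
      by_contra hc
      rw [hTInf, mem_iUnion] at hc
      push_neg at hc
      exact hx (hιoff x hc)
    · intro hx
      obtain ⟨n, hn⟩ := mem_iUnion.1 hx
      rw [hιon n x hn]
      exact hn
  have hιinv : ∀ x, ι (ι x) = x := by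
    intro x
    by_cases h : ∃ n, x ∈ u n
    · obtain ⟨n, hn⟩ := h
      have h1 : ι x = κs n x := hιon n x hn
      have h2 : κs n x ∈ u n := by
        have hx' : κs n x ≠ x := hn
        have hinv2 : κs n (κs n x) = x := (hκsAdm n).2.1 x
        show κs n (κs n x) ≠ κs n x
        rw [hinv2]
        exact fun hc => hx' hc.symm
      rw [h1, hιon n _ h2, (hκsAdm n).2.1 x]
    · push_neg at h
      rw [hιoff x h, hιoff x h]
  have hιgr : ∀ x, (x, ι x) ∈ R := by
    intro x
    by_cases h : ∃ n, x ∈ u n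
    · obtain ⟨n, hn⟩ := h
      rw [hιon n x hn]
      exact (hκsAdm n).2.2 x
    · push_neg at h
      rw [hιoff x h]
      exact hEquiv.refl x
  have hιTInf : ∀ x ∈ TInf, ι x ∈ TInf := by
    intro x hx
    have h1 : ι x ≠ x := (hsupp_ι x).2 hx
    have h2 : ι (ι x) = x := hιinv x
    have h3 : ι (ι x) ≠ ι x := by
      rw [h2]
      exact fun hc => h1 hc.symm
    exact (hsupp_ι (ι x)).1 h3
  -- measures of the pieces tend to zero
  have hpairwise : Pairwise (Function.onFun Disjoint u) := by
    intro m n hmn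
    exact disjoint_iff_inter_eq_empty.2 (hudisj m n hmn)
  have hsum_fin : ∑' n, μ (u n) ≠ ⊤ := by
    rw [← measure_iUnion hpairwise hum]
    exact measure_ne_top μ _
  have htendsto : Filter.Tendsto (fun n => μ (u n)) Filter.atTop (nhds 0) :=
    ENNReal.tendsto_atTop_zero_of_tsum_ne_top hsum_fin
  -- the leftover set and the BAD set
  set L : Set ℝ := TInfᶜ with hL
  have hLm : MeasurableSet L := hTInfm.compl
  set W : Set (ℝ × ℝ) := R ∩ (({p : ℝ × ℝ | p.1 ∈ L} ∩ {p : ℝ × ℝ | p.2 ∈ L}) ∩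
    {p : ℝ × ℝ | p.1 ≠ p.2}) with hWdef
  have hWm : MeasurableSet W := by
    refine hR.inter (MeasurableSet.inter (MeasurableSet.inter ?_ ?_) ?_)
    · exact hLm.preimage measurable_fst
    · exact hLm.preimage measurable_snd
    · exact (measurableSet_eq_fun measurable_fst measurable_snd).compl
  have hBADnull : μ (Prod.fst '' W) = 0 := by
    by_contra hpos
    obtain ⟨κ, hκm, hκinv, hκgr, hκpos⟩ :=
      engine μ hCount' inter_subset_left hWm (fun p hp => hp.2.2) hpos
    have hκAdm : Adm κ := by
      refine ⟨hκm, hκinv, fun x => ?_⟩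
      by_cases hx : κ x = x
      · rw [hx]; exact hEquiv.refl x
      · rcases hκgr x hx with h | h
        · exact h.1
        · exact hEquiv.symm h.1
    have hκsupL : {x | κ x ≠ x} ⊆ L := by
      intro x hx
      rcases hκgr x hx with h | h
      · exact h.2.1.1
      · exact h.2.1.2
    have hgainlb : ∀ n, μ {x | κ x ≠ x} ≤ gain (Ts n) := by
      intro n
      have hdisj : {x | κ x ≠ x} ∩ Ts n = ∅ := by
        have hTsub : Ts n ⊆ TInf := by
          rw [hTs_eq n]
          exact iUnion_subset (fun m => iUnion_subset (fun _ => subset_iUnion u m))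
        ext x
        simp only [mem_inter_iff, mem_empty_iff_false, iff_false, not_and]
        intro h1 h2
        exact absurd (hTsub h2) (hκsupL h1)
      rw [hgain]
      exact le_iSup_of_le ⟨κ, hκAdm, hdisj⟩ (le_refl _)
    have hb : ∀ n, μ {x | κ x ≠ x} ≤ 2 * μ (u n) := fun n =>
      le_trans (hgainlb n) (hpickbound (Ts n))
    have h2 : Filter.Tendsto (fun n => 2 * μ (u n)) Filter.atTop (nhds (2 * 0)) :=
      ENNReal.Tendsto.const_mul htendsto (Or.inr ENNReal.ofNat_ne_top)
    rw [mul_zero] at h2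
    have hle0 : μ {x | κ x ≠ x} ≤ 0 := ge_of_tendsto' h2 hb
    exact hκpos (le_antisymm hle0 (zero_le))
  -- ### repair construction ###
  set W' : Set (ℝ × ℝ) := R ∩ ({p : ℝ × ℝ | p.1 ∈ L} ∩ {p : ℝ × ℝ | p.1 ≠ p.2}) with hW'def
  have hW'm : MeasurableSet W' :=
    hR.inter ((hLm.preimage measurable_fst).inter
      ((measurableSet_eq_fun measurable_fst measurable_snd).compl))
  have hstep : ∀ U : Set ℝ, MeasurableSet U → ∃ (Q : Set ℝ) (f : ℝ → ℝ),
      MeasurableSet Q ∧ Measurable f ∧ (∀ x ∈ Q, (x, f x) ∈ W' ∧ x ∉ U) ∧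
      μ (Prod.fst '' (W' ∩ {p : ℝ × ℝ | p.1 ∉ U})) ≤ 2 * μ Q := by
    intro U hU
    have hWUm : MeasurableSet (W' ∩ {p : ℝ × ℝ | p.1 ∉ U}) :=
      hW'm.inter ((hU.compl).preimage measurable_fst)
    by_cases h0 : μ (Prod.fst '' (W' ∩ {p : ℝ × ℝ | p.1 ∉ U})) = 0
    · refine ⟨∅, id, MeasurableSet.empty, measurable_id, by simp, ?_⟩
      rw [h0]
      exact zero_le
    · have hε : μ (Prod.fst '' (W' ∩ {p : ℝ × ℝ | p.1 ∉ U})) / 2 ≠ 0 := by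
        simp only [ne_eq, ENNReal.div_eq_zero_iff, not_or]
        exact ⟨h0, ENNReal.ofNat_ne_top⟩
      obtain ⟨K, hKc, hKW, hKb⟩ := exists_compact_subset_measure_fst_image μ hWUm hε
      obtain ⟨f, hfm, hfK⟩ := exists_selector_of_isCompact hKc
      refine ⟨Prod.fst '' K, f, (hKc.image continuous_fst).isClosed.measurableSet, hfm, ?_, ?_⟩
      · intro x hx
        have hmem := hKW (hfK x hx)
        exact ⟨hmem.1, hmem.2⟩
      · have hfin : μ (Prod.fst '' (W' ∩ {p : ℝ × ℝ | p.1 ∉ U})) ≠ ⊤ := measure_ne_top μ _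
        have h1 : μ (Prod.fst '' (W' ∩ {p : ℝ × ℝ | p.1 ∉ U})) -
            μ (Prod.fst '' (W' ∩ {p : ℝ × ℝ | p.1 ∉ U})) / 2 ≤ μ (Prod.fst '' K) :=
          tsub_le_iff_right.2 hKb
        rw [ENNReal.sub_half hfin] at h1
        calc μ (Prod.fst '' (W' ∩ {p : ℝ × ℝ | p.1 ∉ U}))
            = 2 * (μ (Prod.fst '' (W' ∩ {p : ℝ × ℝ | p.1 ∉ U})) / 2) :=
              (ENNReal.mul_div_cancel two_ne_zero ENNReal.ofNat_ne_top).symm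
          _ ≤ 2 * μ (Prod.fst '' K) := mul_le_mul_right h1 _
  choose Qf ff hQm hffm hfprop hfbound using hstep
  set It : ℕ → {U : Set ℝ // MeasurableSet U} := fun n =>
    Nat.rec ⟨∅, MeasurableSet.empty⟩
      (fun _ p => ⟨p.1 ∪ Qf p.1 p.2, p.2.union (hQm p.1 p.2)⟩) n with hIt
  set Us : ℕ → Set ℝ := fun n => (It n).1 with hUs
  set Ps : ℕ → Set ℝ := fun n => Qf (Us n) (It n).2 with hPs
  set fs : ℕ → ℝ → ℝ := fun n => ff (Us n) (It n).2 with hfs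
  have hUsucc : ∀ n, Us (n + 1) = Us n ∪ Ps n := fun n => rfl
  have hPsm : ∀ n, MeasurableSet (Ps n) := fun n => hQm _ _
  have hPsprop : ∀ n, ∀ x ∈ Ps n, (x, fs n x) ∈ W' ∧ x ∉ Us n := fun n => hfprop _ _
  have hPsbound : ∀ n, μ (Prod.fst '' (W' ∩ {p : ℝ × ℝ | p.1 ∉ Us n})) ≤ 2 * μ (Ps n) :=
    fun n => hfbound _ _
  have hUs_eq : ∀ n, Us n = ⋃ (m : ℕ) (_ : m < n), Ps m := by
    intro n
    induction n with
    | zero => ext x; simp [hUs, hIt]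
    | succ n ih =>
      rw [hUsucc]
      ext x
      constructor
      · intro hx
        rcases hx with hx | hx
        · rw [ih] at hx
          simp only [mem_iUnion] at hx
          obtain ⟨m, hm, hxm⟩ := hx
          exact mem_iUnion.2 ⟨m, mem_iUnion.2 ⟨Nat.lt_succ_of_lt hm, hxm⟩⟩
        · exact mem_iUnion.2 ⟨n, mem_iUnion.2 ⟨Nat.lt_succ_self n, hx⟩⟩
      · intro hx
        simp only [mem_iUnion] at hx
        obtain ⟨m, hm, hxm⟩ := hx
        rcases Nat.lt_succ_iff_lt_or_eq.1 hm with h | rfl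
        · exact Or.inl (by rw [ih]; exact mem_iUnion.2 ⟨m, mem_iUnion.2 ⟨h, hxm⟩⟩)
        · exact Or.inr hxm
  have hPdisj : ∀ m n : ℕ, m ≠ n → Ps m ∩ Ps n = ∅ := by
    have key : ∀ m n : ℕ, m < n → Ps m ∩ Ps n = ∅ := by
      intro m n hmn
      ext x
      simp only [mem_inter_iff, mem_empty_iff_false, iff_false, not_and]
      intro hxm hxn
      have h1 : x ∈ Us n := by
        rw [hUs_eq n]
        exact mem_iUnion.2 ⟨m, mem_iUnion.2 ⟨hmn, hxm⟩⟩
      exact (hPsprop n x hxn).2 h1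
    intro m n hmn
    rcases hmn.lt_or_gt with h | h
    · exact key m n h
    · rw [inter_comm]; exact key n m h
  obtain ⟨j, hjm, hjon, hjoff⟩ := glue_pieces hPsm hPdisj (fun n => hffm _ _)
  set PInf : Set ℝ := ⋃ n, Ps n with hPInf
  have hPInfm : MeasurableSet PInf := MeasurableSet.iUnion hPsm
  have hjprop : ∀ x ∈ PInf, (x, j x) ∈ W' := by
    intro x hx
    obtain ⟨n, hn⟩ := mem_iUnion.1 hx
    rw [hjon n x hn]
    exact (hPsprop n x hn).1
  have hPpair : Pairwise (Function.onFun Disjoint Ps) := fun m n hmn =>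
    disjoint_iff_inter_eq_empty.2 (hPdisj m n hmn)
  have hPsum_fin : ∑' n, μ (Ps n) ≠ ⊤ := by
    rw [← measure_iUnion hPpair hPsm]
    exact measure_ne_top μ _
  have hPtendsto : Filter.Tendsto (fun n => μ (Ps n)) Filter.atTop (nhds 0) :=
    ENNReal.tendsto_atTop_zero_of_tsum_ne_top hPsum_fin
  have hrem : μ (Prod.fst '' W' \ PInf) = 0 := by
    have hb : ∀ n, μ (Prod.fst '' W' \ PInf) ≤ 2 * μ (Ps n) := by
      intro n
      refine le_trans (measure_mono ?_) (hPsbound n)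
      rintro x ⟨⟨p, hp, rfl⟩, hxP⟩
      refine ⟨p, ⟨hp, ?_⟩, rfl⟩
      intro hc
      rw [hUs_eq n] at hc
      simp only [mem_iUnion] at hc
      obtain ⟨m, _, hm⟩ := hc
      exact hxP (mem_iUnion.2 ⟨m, hm⟩)
    have h2 : Filter.Tendsto (fun n => 2 * μ (Ps n)) Filter.atTop (nhds (2 * 0)) :=
      ENNReal.Tendsto.const_mul hPtendsto (Or.inr ENNReal.ofNat_ne_top)
    rw [mul_zero] at h2
    exact le_antisymm (ge_of_tendsto' h2 hb) (zero_le)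
  -- ### the lone set ###
  set N' : Set ℝ := toMeasurable μ (Prod.fst '' W) with hN'
  have hN'm : MeasurableSet N' := measurableSet_toMeasurable μ _
  have hN'null : μ N' = 0 := by
    rw [hN', measure_toMeasurable]
    exact hBADnull
  set Λ : Set ℝ := PInf \ N' with hΛ
  have hΛm : MeasurableSet Λ := hPInfm.diff hN'm
  have hΛL : Λ ⊆ L := fun x hx => (hjprop x hx.1).2.1
  have hΛj : ∀ x ∈ Λ, (x, j x) ∈ R ∧ j x ≠ x := by
    intro x hx
    have h := hjprop x hx.1
    exact ⟨h.1, fun hc => h.2.2 hc.symm⟩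
  have hlone : ∀ x ∈ Λ, ∀ y, (x, y) ∈ R → y ≠ x → y ∈ TInf := by
    intro x hx y hyR hyne
    by_contra hyT
    have hxW : x ∈ Prod.fst '' W := by
      refine ⟨(x, y), ⟨hyR, ⟨⟨hΛL hx, hyT⟩, fun hc => hyne hc.symm⟩⟩, rfl⟩
    exact hx.2 (subset_toMeasurable μ _ hxW)
  have hjTInf : ∀ x ∈ Λ, j x ∈ TInf := fun x hx =>
    hlone x hx (j x) (hΛj x hx).1 (hΛj x hx).2
  have hΛTdisj : ∀ x, x ∈ Λ → x ∈ TInf → False := fun x hx hxT => (hΛL hx) hxT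
  have hjinj : InjOn j Λ := by
    intro x1 h1 x2 h2 heq
    by_contra hne
    have hr1 : (x1, j x1) ∈ R := (hΛj x1 h1).1
    have hr2 : (x2, j x2) ∈ R := (hΛj x2 h2).1
    rw [heq] at hr1
    have hx12 : (x1, x2) ∈ R := hEquiv.trans hr1 (hEquiv.symm hr2)
    have hT := hlone x1 h1 x2 hx12 (fun hc => hne hc.symm)
    exact hΛTdisj x2 h2 hT
  -- ### the three moving zones ###
  set Ca : Set ℝ := j '' Λ with hCa
  have hCam : MeasurableSet Ca := hΛm.image_of_measurable_injOn hjm hjinj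
  have hCaT : Ca ⊆ TInf := by
    rintro z ⟨x, hx, rfl⟩
    exact hjTInf x hx
  set Cb : Set ℝ := ι ⁻¹' Ca with hCb
  have hCbm : MeasurableSet Cb := hιm hCam
  have hιfix_off : ∀ x, x ∉ TInf → ι x = x := by
    intro x hx
    by_contra hc
    exact hx ((hsupp_ι x).1 hc)
  have hCbT : Cb ⊆ TInf := by
    intro z hz
    by_contra hzT
    have hzfix : ι z = z := hιfix_off z hzT
    have hzCa : z ∈ Ca := by
      have : ι z ∈ Ca := hz
      rwa [hzfix] at this
    exact hzT (hCaT hzCa)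
  have hCaCb : ∀ z, z ∈ Ca → z ∈ Cb → False := by
    intro z hzCa hzCb
    obtain ⟨x, hx, hjx⟩ := hzCa
    obtain ⟨x', hx', hjx'⟩ := (hzCb : ι z ∈ Ca)
    have hr1 : (x, z) ∈ R := by rw [← hjx]; exact (hΛj x hx).1
    have hr2 : (x', ι z) ∈ R := by rw [← hjx']; exact (hΛj x' hx').1
    have hr3 : (z, ι z) ∈ R := hιgr z
    have hxx' : (x, x') ∈ R := hEquiv.trans (hEquiv.trans hr1 hr3) (hEquiv.symm hr2)
    have hxeq : x = x' := by
      by_contra hne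
      exact hΛTdisj x' hx' (hlone x hx x' hxx' (fun hc => hne hc.symm))
    have hzT : z ∈ TInf := hCaT ⟨x, hx, hjx⟩
    have hfix : ι z = z := by rw [← hjx', ← hxeq, hjx]
    exact ((hsupp_ι z).2 hzT) hfix
  obtain ⟨ψ, hψm, hψinv⟩ := exists_leftInv hΛm hjm hjinj
  -- ### the automorphism ###
  set α : ℝ → ℝ := fun x => if x ∈ Λ then j x else if x ∈ Cb then ψ (ι x) else ι x with hα
  set β : ℝ → ℝ := fun x => if x ∈ Λ then ι (j x) else if x ∈ Ca then ψ x else ι x with hβ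
  have hαΛ : ∀ x ∈ Λ, α x = j x := fun x hx => by simp only [hα, if_pos hx]
  have hαCb : ∀ x, x ∉ Λ → x ∈ Cb → α x = ψ (ι x) := fun x h1 h2 => by
    simp only [hα, if_neg h1, if_pos h2]
  have hαother : ∀ x, x ∉ Λ → x ∉ Cb → α x = ι x := fun x h1 h2 => by
    simp only [hα, if_neg h1, if_neg h2]
  have hβΛ : ∀ x ∈ Λ, β x = ι (j x) := fun x hx => by simp only [hβ, if_pos hx]
  have hβCa : ∀ x, x ∉ Λ → x ∈ Ca → β x = ψ x := fun x h1 h2 => by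
    simp only [hβ, if_neg h1, if_pos h2]
  have hβother : ∀ x, x ∉ Λ → x ∉ Ca → β x = ι x := fun x h1 h2 => by
    simp only [hβ, if_neg h1, if_neg h2]
  have hnotΛ_of_T : ∀ x, x ∈ TInf → x ∉ Λ := fun x hxT hxΛ => hΛTdisj x hxΛ hxT
  have hιnotΛ : ∀ x, x ∉ Λ → ι x ∉ Λ := by
    intro x hx
    by_cases hxT : x ∈ TInf
    · exact hnotΛ_of_T _ (hιTInf x hxT)
    · rw [hιfix_off x hxT]
      exact hx
  have hleft : ∀ x, β (α x) = x := by
    intro x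
    by_cases h1 : x ∈ Λ
    · rw [hαΛ x h1]
      have hjCa : j x ∈ Ca := ⟨x, h1, rfl⟩
      have hjΛ : j x ∉ Λ := hnotΛ_of_T _ (hCaT hjCa)
      rw [hβCa _ hjΛ hjCa, hψinv x h1]
    · by_cases h2 : x ∈ Cb
      · rw [hαCb x h1 h2]
        obtain ⟨x0, hx0, hjx0⟩ := (h2 : ι x ∈ Ca)
        have hψval : ψ (ι x) = x0 := by rw [← hjx0, hψinv x0 hx0]
        rw [hψval, hβΛ x0 hx0, hjx0, hιinv x]
      · rw [hαother x h1 h2]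
        have hi1 : ι x ∉ Λ := hιnotΛ x h1
        have hi2 : ι x ∉ Ca := by
          intro hc
          exact h2 (show ι x ∈ Ca from hc)
        rw [hβother _ hi1 hi2, hιinv x]
  have hright : ∀ x, α (β x) = x := by
    intro x
    by_cases h1 : x ∈ Λ
    · rw [hβΛ x h1]
      have hjCa : j x ∈ Ca := ⟨x, h1, rfl⟩
      have hbT : ι (j x) ∈ TInf := hιTInf _ (hCaT hjCa)
      have hbΛ : ι (j x) ∉ Λ := hnotΛ_of_T _ hbT
      have hbCb : ι (j x) ∈ Cb := by
        show ι (ι (j x)) ∈ Ca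
        rw [hιinv]
        exact hjCa
      rw [hαCb _ hbΛ hbCb, hιinv, hψinv x h1]
    · by_cases h2 : x ∈ Ca
      · rw [hβCa x h1 h2]
        obtain ⟨x0, hx0, hjx0⟩ := h2
        have hψval : ψ x = x0 := by rw [← hjx0, hψinv x0 hx0]
        rw [hψval, hαΛ x0 hx0, hjx0]
      · rw [hβother x h1 h2]
        have hi1 : ι x ∉ Λ := hιnotΛ x h1
        have hi2 : ι x ∉ Cb := by
          intro hc
          have : ι (ι x) ∈ Ca := hc
          rw [hιinv] at this
          exact h2 this
        rw [hαother _ hi1 hi2, hιinv x]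
  have hgraph : ∀ x, (x, α x) ∈ R := by
    intro x
    by_cases h1 : x ∈ Λ
    · rw [hαΛ x h1]
      exact (hΛj x h1).1
    · by_cases h2 : x ∈ Cb
      · rw [hαCb x h1 h2]
        obtain ⟨x0, hx0, hjx0⟩ := (h2 : ι x ∈ Ca)
        have hψval : ψ (ι x) = x0 := by rw [← hjx0, hψinv x0 hx0]
        rw [hψval]
        have hr1 : (x0, ι x) ∈ R := by rw [← hjx0]; exact (hΛj x0 hx0).1
        exact hEquiv.trans (hιgr x) (hEquiv.symm hr1)
      · rw [hαother x h1 h2]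
        exact hιgr x
  have hsupp_eq : {x | α x ≠ x} = TInf ∪ Λ := by
    ext x
    simp only [mem_setOf_eq, mem_union]
    constructor
    · intro hx
      by_contra hc
      push_neg at hc
      have h1 : x ∉ Λ := hc.2
      have h2 : x ∉ Cb := fun h => hc.1 (hCbT h)
      rw [hαother x h1 h2] at hx
      exact hc.1 ((hsupp_ι x).1 hx)
    · intro hx
      by_cases hxΛ : x ∈ Λ
      · rw [hαΛ x hxΛ]
        exact (hΛj x hxΛ).2
      · rcases hx with hxT | hxT
        · by_cases hxCb : x ∈ Cb
          · rw [hαCb x hxΛ hxCb]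
            obtain ⟨x0, hx0, hjx0⟩ := (hxCb : ι x ∈ Ca)
            have hψval : ψ (ι x) = x0 := by rw [← hjx0, hψinv x0 hx0]
            rw [hψval]
            intro hc
            exact hΛTdisj x (hc ▸ hx0) hxT
          · rw [hαother x hxΛ hxCb]
            exact (hsupp_ι x).2 hxT
        · exact absurd hxT hxΛ
  -- ### the measure estimate ###
  have hsuppE : (TInf ∪ Λ) ⊆ {x | Set.Nontrivial {y | (x, y) ∈ R}} := by
    intro x hx
    rcases hx with hx | hx
    · exact ⟨ι x, hιgr x, x, hEquiv.refl x, (hsupp_ι x).2 hx⟩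
    · exact ⟨j x, (hΛj x hx).1, x, hEquiv.refl x, (hΛj x hx).2⟩
  have hEsub : {x | Set.Nontrivial {y | (x, y) ∈ R}} \ (TInf ∪ Λ) ⊆
      (Prod.fst '' W' \ PInf) ∪ N' := by
    rintro x ⟨hxE, hxn⟩
    rw [mem_union] at hxn
    push_neg at hxn
    have hxL : x ∈ L := hxn.1
    obtain ⟨a, ha, b, hb, hab⟩ := hxE
    have hy : ∃ y, (x, y) ∈ R ∧ y ≠ x := by
      by_cases hax : a = x
      · exact ⟨b, hb, fun hc => hab (by rw [hax, hc])⟩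
      · exact ⟨a, ha, hax⟩
    obtain ⟨y, hyR, hyne⟩ := hy
    have hxW' : x ∈ Prod.fst '' W' :=
      ⟨(x, y), ⟨hyR, ⟨hxL, fun hc => hyne hc.symm⟩⟩, rfl⟩
    by_cases hxP : x ∈ PInf
    · right
      by_contra hxN
      exact hxn.2 ⟨hxP, hxN⟩
    · exact Or.inl ⟨hxW', hxP⟩
  have hfinal : μ (symmDiff {x | α x ≠ x} {x | Set.Nontrivial {y | (x, y) ∈ R}}) = 0 := by
    have hsub : symmDiff {x | α x ≠ x} {x | Set.Nontrivial {y | (x, y) ∈ R}} ⊆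
        (Prod.fst '' W' \ PInf) ∪ N' := by
      intro x hx
      rcases Set.mem_symmDiff.1 hx with ⟨h1, h2⟩ | ⟨h1, h2⟩
      · rw [hsupp_eq] at h1
        exact absurd (hsuppE h1) h2
      · rw [hsupp_eq] at h2
        exact hEsub ⟨h1, h2⟩
    refine le_antisymm (le_trans (measure_mono hsub) ?_) (zero_le)
    exact (measure_union_null hrem hN'null).le
  have hαm : Measurable α := by
    have heq : α = Λ.piecewise j (Cb.piecewise (fun x => ψ (ι x)) ι) := by
      ext x
      by_cases h1 : x ∈ Λ <;> by_cases h2 : x ∈ Cb <;>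
        simp [hα, Set.piecewise, h1, h2]
    rw [heq]
    exact Measurable.piecewise hΛm hjm (Measurable.piecewise hCbm (hψm.comp hιm) hιm)
  have hβm : Measurable β := by
    have heq : β = Λ.piecewise (fun x => ι (j x)) (Ca.piecewise ψ ι) := by
      ext x
      by_cases h1 : x ∈ Λ <;> by_cases h2 : x ∈ Ca <;>
        simp [hβ, Set.piecewise, h1, h2]
    rw [heq]
    exact Measurable.piecewise hΛm (hιm.comp hjm) (Measurable.piecewise hCam hψm hιm)
  exact ⟨⟨⟨α, β, hleft, hright⟩, hαm, hβm⟩, hgraph, hfinal⟩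

end AutSupportPer

/-- for a countable Borel equivalence relation `R` on a standard probability
space `(X,μ)` there is a Borel automorphism `α` of `X` with `(x, α x) ∈ R` for all `x`,
whose support is, up to a `μ`-null set, the set `Per_{≥2}(R)` of points whose `R`-class
has at least two elements. -/
theorem exists_aut_support_per {X : Type*} [MeasurableSpace X] [StandardBorelSpace X]
    (μ : Measure X) [IsProbabilityMeasure μ] (R : Set (X × X)) (hR : MeasurableSet R)
    (hEquiv : Equivalence fun x y => (x, y) ∈ R)
    (hCount : ∀ x : X, {y | (x, y) ∈ R}.Countable) :
    ∃ α : X ≃ᵐ X, (∀ x, (x, α x) ∈ R) ∧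
      μ (symmDiff {x | α x ≠ x} {x | Set.Nontrivial {y | (x, y) ∈ R}}) = 0 := by
  classical
  haveI hXne : Nonempty X := by
    by_contra h
    rw [not_nonempty_iff] at h
    have h1 : μ univ = 1 := measure_univ
    rw [Set.univ_eq_empty_iff.2 h, measure_empty] at h1
    exact zero_ne_one h1
  set g : X → ℝ := MeasureTheory.embeddingReal X with hgdef
  have hg : MeasurableEmbedding g := MeasureTheory.measurableEmbedding_embeddingReal X
  set μ' : Measure ℝ := Measure.map g μ with hμ'
  haveI : IsProbabilityMeasure μ' := Measure.isProbabilityMeasure_map hg.measurable.aemeasurable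
  set G : X × X → ℝ × ℝ := fun p => (g p.1, g p.2) with hG
  have hGm : Measurable G := (hg.measurable.comp measurable_fst).prodMk
    (hg.measurable.comp measurable_snd)
  have hGinj : Function.Injective G := by
    intro p q hpq
    have h1 : g p.1 = g q.1 := congrArg Prod.fst hpq
    have h2 : g p.2 = g q.2 := congrArg Prod.snd hpq
    exact Prod.ext (hg.injective h1) (hg.injective h2)
  have hGemb : MeasurableEmbedding G := hGm.measurableEmbedding hGinj
  set R' : Set (ℝ × ℝ) := G '' R ∪ {p : ℝ × ℝ | p.1 = p.2} with hR'
  have hR'm : MeasurableSet R' :=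
    (hGemb.measurableSet_image' hR).union (measurableSet_eq_fun measurable_fst measurable_snd)
  have hEquiv' : Equivalence fun s t : ℝ => (s, t) ∈ R' := by
    constructor
    · exact fun t => Or.inr rfl
    · rintro s t (⟨⟨a, b⟩, hab, heq⟩ | heq)
      · have h1 : g a = s := congrArg Prod.fst heq
        have h2 : g b = t := congrArg Prod.snd heq
        refine Or.inl ⟨(b, a), hEquiv.symm hab, ?_⟩
        show (g b, g a) = (t, s)
        rw [h1, h2]
      · exact Or.inr heq.symm
    · rintro s t v hst htv
      rcases hst with ⟨⟨a, b⟩, hab, heq⟩ | heq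
      · rcases htv with ⟨⟨a', b'⟩, hab', heq'⟩ | heq'
        · have hb : g b = t := congrArg Prod.snd heq
          have ha' : g a' = t := congrArg Prod.fst heq'
          have hba' : b = a' := hg.injective (by rw [hb, ha'])
          refine Or.inl ⟨(a, b'), hEquiv.trans hab (hba' ▸ hab'), ?_⟩
          have h1 : g a = s := congrArg Prod.fst heq
          have h2 : g b' = v := congrArg Prod.snd heq'
          show (g a, g b') = (s, v)
          rw [h1, h2]
        · refine Or.inl ⟨(a, b), hab, ?_⟩
          have htv : t = v := heq'
          rw [← htv]
          exact heq
      · rw [show s = t from heq]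
        exact htv
  have hCountR' : ∀ t : ℝ, {v | (t, v) ∈ R'}.Countable := by
    intro t
    by_cases ht : ∃ x0, g x0 = t
    · obtain ⟨x0, rfl⟩ := ht
      have hsub : {v | (g x0, v) ∈ R'} ⊆ {g x0} ∪ (g '' {y | (x0, y) ∈ R}) := by
        rintro v (⟨⟨a, b⟩, hab, heq⟩ | heq)
        · have h1 : g a = g x0 := congrArg Prod.fst heq
          have h2 : g b = v := congrArg Prod.snd heq
          have ha : a = x0 := hg.injective h1
          exact Or.inr ⟨b, ha ▸ hab, h2⟩
        · exact Or.inl heq.symm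
      exact Countable.mono hsub ((countable_singleton _).union ((hCount x0).image g))
    · have hsub : {v | (t, v) ∈ R'} ⊆ {t} := by
        rintro v (⟨⟨a, b⟩, hab, heq⟩ | heq)
        · exact absurd ⟨a, congrArg Prod.fst heq⟩ ht
        · exact heq.symm
      exact Countable.mono hsub (countable_singleton t)
  obtain ⟨α', hα'gr, hα'null⟩ := AutSupportPer.main_real μ' R' hR'm hEquiv' hCountR'
  have hfix : ∀ t, t ∉ range g → α' t = t := by
    intro t ht
    rcases hα'gr t with ⟨⟨a, b⟩, hab, heq⟩ | heq
    · exact absurd ⟨a, congrArg Prod.fst heq⟩ ht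
    · exact heq.symm
  have hrange : ∀ x : X, α' (g x) ∈ range g := by
    intro x
    rcases hα'gr (g x) with ⟨⟨a, b⟩, hab, heq⟩ | heq
    · exact ⟨b, congrArg Prod.snd heq⟩
    · exact ⟨x, heq⟩
  obtain ⟨r, hrm, hrinv⟩ := AutSupportPer.exists_leftInv (MeasurableSet.univ (α := X))
    hg.measurable (hg.injective.injOn)
  have hrg : ∀ x, r (g x) = x := fun x => hrinv x (mem_univ x)
  have hgr : ∀ t, t ∈ range g → g (r t) = t := by
    rintro t ⟨x, rfl⟩
    rw [hrg]
  set αX : X → X := fun x => r (α' (g x)) with hαX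
  set βX : X → X := fun x => r (α'.symm (g x)) with hβX
  have hmαX : Measurable αX := hrm.comp (α'.measurable.comp hg.measurable)
  have hmβX : Measurable βX := hrm.comp (α'.symm.measurable.comp hg.measurable)
  have hgαX : ∀ x, g (αX x) = α' (g x) := fun x => hgr _ (hrange x)
  have hrange_symm : ∀ x : X, α'.symm (g x) ∈ range g := by
    intro x
    by_contra hc
    have h1 : α' (α'.symm (g x)) = α'.symm (g x) := hfix _ hc
    rw [MeasurableEquiv.apply_symm_apply] at h1
    exact hc (h1 ▸ (⟨x, rfl⟩ : g x ∈ range g))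
  have hgβX : ∀ x, g (βX x) = α'.symm (g x) := fun x => hgr _ (hrange_symm x)
  have hleft : ∀ x, βX (αX x) = x := by
    intro x
    refine hg.injective ?_
    rw [hgβX, hgαX, MeasurableEquiv.symm_apply_apply]
  have hright : ∀ x, αX (βX x) = x := by
    intro x
    refine hg.injective ?_
    rw [hgαX, hgβX, MeasurableEquiv.apply_symm_apply]
  have hgraphX : ∀ x, (x, αX x) ∈ R := by
    intro x
    rcases hα'gr (g x) with ⟨⟨a, b⟩, hab, heq⟩ | heq
    · have h1 : g a = g x := congrArg Prod.fst heq
      have h2 : g b = α' (g x) := congrArg Prod.snd heq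
      have ha : a = x := hg.injective h1
      have hb : b = αX x := hg.injective (by rw [h2, ← hgαX])
      rw [← hb, ← ha]
      exact hab
    · have heq2 : g x = α' (g x) := heq
      have hfixx : αX x = x := by
        show r (α' (g x)) = x
        rw [← heq2, hrg]
      rw [hfixx]
      exact hEquiv.refl x
  have hsupp_pre : {x | αX x ≠ x} = g ⁻¹' {t | α' t ≠ t} := by
    ext x
    simp only [mem_setOf_eq, mem_preimage]
    constructor
    · intro hx hc
      refine hx ?_
      rw [hαX]
      show r (α' (g x)) = x
      rw [hc, hrg]
    · intro ht hc
      refine ht ?_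
      rw [← hgαX x, hc]
  have hE_pre : {x | Set.Nontrivial {y | (x, y) ∈ R}} =
      g ⁻¹' {t | Set.Nontrivial {v | (t, v) ∈ R'}} := by
    ext x
    simp only [mem_setOf_eq, mem_preimage]
    constructor
    · rintro ⟨a, ha, b, hb, hab⟩
      exact ⟨g a, Or.inl ⟨(x, a), ha, rfl⟩, g b, Or.inl ⟨(x, b), hb, rfl⟩,
        fun hc => hab (hg.injective hc)⟩
    · rintro ⟨v1, hv1, v2, hv2, hv12⟩
      have hcl : ∀ v, (g x, v) ∈ R' → ∃ y, (x, y) ∈ R ∧ g y = v := by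
        rintro v (⟨⟨a, b⟩, hab, heq⟩ | heq)
        · have ha : a = x := hg.injective (congrArg Prod.fst heq)
          exact ⟨b, ha ▸ hab, congrArg Prod.snd heq⟩
        · exact ⟨x, hEquiv.refl x, heq⟩
      obtain ⟨y1, hy1, hgy1⟩ := hcl v1 hv1
      obtain ⟨y2, hy2, hgy2⟩ := hcl v2 hv2
      exact ⟨y1, hy1, y2, hy2, fun hc => hv12 (by rw [← hgy1, ← hgy2, hc])⟩
  have hnullX : μ (symmDiff {x | αX x ≠ x} {x | Set.Nontrivial {y | (x, y) ∈ R}}) = 0 := by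
    have hpre : symmDiff {x | αX x ≠ x} {x | Set.Nontrivial {y | (x, y) ∈ R}} =
        g ⁻¹' (symmDiff {t | α' t ≠ t} {t | Set.Nontrivial {v | (t, v) ∈ R'}}) := by
      rw [hsupp_pre, hE_pre]
      ext x
      simp [Set.mem_symmDiff]
    rw [hpre]
    have hZN := subset_toMeasurable μ'
      (symmDiff {t | α' t ≠ t} {t | Set.Nontrivial {v | (t, v) ∈ R'}})
    have hZ0 : μ' (toMeasurable μ'
        (symmDiff {t | α' t ≠ t} {t | Set.Nontrivial {v | (t, v) ∈ R'}})) = 0 := by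
      rw [measure_toMeasurable]
      exact hα'null
    have hmap := Measure.map_apply (μ := μ) hg.measurable (measurableSet_toMeasurable μ'
      (symmDiff {t | α' t ≠ t} {t | Set.Nontrivial {v | (t, v) ∈ R'}}))
    refine le_antisymm ?_ (zero_le)
    calc μ (g ⁻¹' (symmDiff {t | α' t ≠ t} {t | Set.Nontrivial {v | (t, v) ∈ R'}}))
        ≤ μ (g ⁻¹' (toMeasurable μ'
            (symmDiff {t | α' t ≠ t} {t | Set.Nontrivial {v | (t, v) ∈ R'}}))) :=
          measure_mono (preimage_mono hZN)
      _ = μ' (toMeasurable μ'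
            (symmDiff {t | α' t ≠ t} {t | Set.Nontrivial {v | (t, v) ∈ R'}})) := hmap.symm
      _ = 0 := hZ0
  exact ⟨⟨⟨αX, βX, hleft, hright⟩, hmαX, hmβX⟩, hgraphX, hnullX⟩
end
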